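/- arXiv:cs/0401021 — 2 statements merged into one kernel-verified Lean document; each statement's English description precedes it below -/
import Mathlib

section
/- Let T be a syntactic equality theory and let σ, τ ∈ RSubst both be satisfiable in T, with T ⊢ ∀(σ ↔ τ) (the universal closure of the biconditional of the two substitutions viewed as conjunctions of equations). Then ssets(σ) = ssets(τ), gvars(σ) = gvars(τ), fvars(σ) = fvars(τ), and lvars(σ) = lvars(τ). -/
open Classical

noncomputable section

/-- Finite terms over a ranked signature `Sig` (with arity function `ar`)
and variables taken from `Vr`. -/
inductive HTerm (Sig : Type) (ar : Sig → ℕ) (Vr : Type) : Type where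
  | var : Vr → HTerm Sig ar Vr
  | app : (f : Sig) → (Fin (ar f) → HTerm Sig ar Vr) → HTerm Sig ar Vr

namespace HTerm

variable {Sig : Type} {ar : Sig → ℕ} {Vr : Type}

/-- The set of variables occurring in a term. -/
def vars : HTerm Sig ar Vr → Set Vr
  | var x => {x}
  | app _ ts => ⋃ i, (ts i).vars

/-- The number of occurrences of the variable `z` in a term. -/
def count (z : Vr) : HTerm Sig ar Vr → ℕ
  | var x => if x = z then 1 else 0
  | app _ ts => ∑ i, (ts i).count z

/-- Application of a (raw) substitution to a term. -/
def substApp (σ : Vr → HTerm Sig ar Vr) : HTerm Sig ar Vr → HTerm Sig ar Vr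
  | var x => σ x
  | app f ts => app f (fun i => (ts i).substApp σ)

end HTerm

/-- A substitution: a map from variables to finite terms that is the identity
almost everywhere. -/
structure Subst (Sig : Type) (ar : Sig → ℕ) (Vr : Type) where
  toFun : Vr → HTerm Sig ar Vr
  finite_dom : {x : Vr | toFun x ≠ HTerm.var x}.Finite

namespace Subst

variable {Sig : Type} {ar : Sig → ℕ} {Vr : Type}

/-- The domain of a substitution. -/
def dom (σ : Subst Sig ar Vr) : Set Vr := {x | σ.toFun x ≠ HTerm.var x}

/-- The number of bindings `#σ`. -/
def nb (σ : Subst Sig ar Vr) : ℕ := σ.finite_dom.toFinset.card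

/-- `iterApp σ i t` is `t σ^i`, the `i`-fold application of `σ` to `t`. -/
def iterApp (σ : Subst Sig ar Vr) (i : ℕ) (t : HTerm Sig ar Vr) : HTerm Sig ar Vr :=
  (HTerm.substApp σ.toFun)^[i] t

/-- `σ` has a circular subset `{x₁↦x₂, …, x_{n-1}↦xₙ, xₙ↦x₁}` with `n > 1`
distinct variables. -/
def HasCircularSubset (σ : Subst Sig ar Vr) : Prop :=
  ∃ n : ℕ, ∃ _h : 1 < n, ∃ x : Fin n → Vr, Function.Injective x ∧
    ∀ i : Fin n, σ.toFun (x i) = HTerm.var (x ⟨(i.1 + 1) % n, Nat.mod_lt _ (by omega)⟩)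

/-- `σ` is in rational solved form: it has no circular subset. -/
def IsRSubst (σ : Subst Sig ar Vr) : Prop := ¬ σ.HasCircularSubset

/-- The occurrence operator: `occ σ v = {y | v ∈ vars(y σ^n) \ dom σ}` where `n = #σ`. -/
def occ (σ : Subst Sig ar Vr) (v : Vr) : Set Vr :=
  {y | v ∈ (σ.iterApp σ.nb (HTerm.var y)).vars ∧ v ∉ σ.dom}

/-- The freeness operator: `fvars σ = {y | y σ^n ∈ Vars}` where `n = #σ`. -/
def fvars (σ : Subst Sig ar Vr) : Set Vr :=
  {y | ∃ z : Vr, σ.iterApp σ.nb (HTerm.var y) = HTerm.var z}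

/-- The groundness operator. -/
def gvars (σ : Subst Sig ar Vr) : Set Vr :=
  {y | y ∈ σ.dom ∧ ∀ v : Vr, y ∉ σ.occ v}

/-- The linearity operator: every non-domain variable of `y σ^n` occurs exactly
once in `y σ^{2n}`, where `n = #σ`. -/
def lvars (σ : Subst Sig ar Vr) : Set Vr :=
  {y | ∀ z ∈ (σ.iterApp σ.nb (HTerm.var y)).vars, z ∉ σ.dom →
        (σ.iterApp (2 * σ.nb) (HTerm.var y)).count z = 1}

/-- The sharing-sets operator: `ssets σ VI = {occ(σ,v) ∩ VI | v ∈ Vars} \ {∅}`. -/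
def ssets (σ : Subst Sig ar Vr) (VI : Set Vr) : Set (Set Vr) :=
  {g | (∃ v : Vr, g = σ.occ v ∩ VI) ∧ g ≠ ∅}

/-- The set of variables occurring in (the bindings of) a substitution. -/
def varsOf (σ : Subst Sig ar Vr) : Set Vr :=
  ⋃ x ∈ σ.dom, ({x} ∪ (σ.toFun x).vars)

end Subst

/-- A first-order interpretation (model) of the signature: a carrier together
with an interpretation of each function symbol. -/
structure Interp (Sig : Type) (ar : Sig → ℕ) : Type 1 where
  carrier : Type
  interp : (f : Sig) → (Fin (ar f) → carrier) → carrier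

namespace Interp

variable {Sig : Type} {ar : Sig → ℕ} {Vr : Type}

/-- Evaluation of a term in an interpretation under a valuation of the variables. -/
def eval (M : Interp Sig ar) (ν : Vr → M.carrier) : HTerm Sig ar Vr → M.carrier
  | HTerm.var x => ν x
  | HTerm.app f ts => M.interp f (fun i => M.eval ν (ts i))

/-- `M` satisfies the identity axioms: function symbols are injective and
terms with distinct outermost function symbols are unequal. -/
def SatisfiesIdentity (M : Interp Sig ar) : Prop :=
  (∀ (f : Sig) (a b : Fin (ar f) → M.carrier), M.interp f a = M.interp f b → a = b) ∧
  (∀ (f g : Sig) (a : Fin (ar f) → M.carrier) (b : Fin (ar g) → M.carrier),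
      f ≠ g → M.interp f a ≠ M.interp g b)

/-- `M` satisfies a set of equations under a valuation. -/
def SatEqs (M : Interp Sig ar) (ν : Vr → M.carrier)
    (e : Set (HTerm Sig ar Vr × HTerm Sig ar Vr)) : Prop :=
  ∀ p ∈ e, M.eval ν p.1 = M.eval ν p.2

/-- `M` satisfies the occurs-check axioms (for variables in `Vr`). -/
def SatisfiesOC (M : Interp Sig ar) (Vr : Type) : Prop :=
  ∀ (t : HTerm Sig ar Vr) (z : Vr), (∀ y : Vr, t ≠ HTerm.var y) → z ∈ t.vars →
    ∀ ν : Vr → M.carrier, M.eval ν t ≠ ν z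

end Interp

/-- The set of equations corresponding to a substitution:
`{x = σ(x) | x ∈ dom σ}`. -/
def eqsOf {Sig : Type} {ar : Sig → ℕ} {Vr : Type} (σ : Subst Sig ar Vr) :
    Set (HTerm Sig ar Vr × HTerm Sig ar Vr) :=
  {p | ∃ x ∈ σ.dom, p = (HTerm.var x, σ.toFun x)}

/-- A theory is identified (semantically) with its class of models; a
syntactic equality theory is a consistent theory all of whose models
satisfy the (congruence and) identity axioms. -/
def IsSyntacticTheory {Sig : Type} {ar : Sig → ℕ} (T : Set (Interp Sig ar)) : Prop :=
  T.Nonempty ∧ ∀ M ∈ T, M.SatisfiesIdentity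

/-- `σ` is satisfiable in `T`: in every model of `T`, every valuation of the
non-domain variables extends to a valuation satisfying `σ`;
semantically, `T ⊢ ∀ (Vars \ dom σ) : ∃ dom σ . σ`. -/
def SatisfiableIn {Sig : Type} {ar : Sig → ℕ} {Vr : Type}
    (T : Set (Interp Sig ar)) (σ : Subst Sig ar Vr) : Prop :=
  ∀ M ∈ T, ∀ ν : Vr → M.carrier, ∃ ν' : Vr → M.carrier,
    (∀ x ∉ σ.dom, ν' x = ν x) ∧ M.SatEqs ν' (eqsOf σ)

/-- `T ⊢ ∀ (σ ↔ τ)`, semantically. -/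
def EquivIn {Sig : Type} {ar : Sig → ℕ} {Vr : Type}
    (T : Set (Interp Sig ar)) (σ τ : Subst Sig ar Vr) : Prop :=
  ∀ M ∈ T, ∀ ν : Vr → M.carrier, M.SatEqs ν (eqsOf σ) ↔ M.SatEqs ν (eqsOf τ)
/-! ### Auxiliary syntactic lemmas -/

section AuxSyn

open HTerm

variable {Sig : Type} {ar : Sig → ℕ} {Vr : Type}

lemma iterApp_zero (σ : Subst Sig ar Vr) (t : HTerm Sig ar Vr) : σ.iterApp 0 t = t := rfl

lemma iterApp_succ (σ : Subst Sig ar Vr) (k : ℕ) (t : HTerm Sig ar Vr) :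
    σ.iterApp (k + 1) t = σ.iterApp k (t.substApp σ.toFun) :=
  Function.iterate_succ_apply _ _ _

lemma iterApp_succ' (σ : Subst Sig ar Vr) (k : ℕ) (t : HTerm Sig ar Vr) :
    σ.iterApp (k + 1) t = (σ.iterApp k t).substApp σ.toFun :=
  Function.iterate_succ_apply' _ _ _

lemma iterApp_add (σ : Subst Sig ar Vr) (j k : ℕ) (t : HTerm Sig ar Vr) :
    σ.iterApp (j + k) t = σ.iterApp j (σ.iterApp k t) :=
  Function.iterate_add_apply _ _ _ _

lemma substApp_var (F : Vr → HTerm Sig ar Vr) (x : Vr) :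
    (HTerm.var (Sig := Sig) (ar := ar) x).substApp F = F x := rfl

lemma substApp_app (F : Vr → HTerm Sig ar Vr) (f : Sig) (ts : Fin (ar f) → HTerm Sig ar Vr) :
    (HTerm.app f ts).substApp F = HTerm.app f (fun i => (ts i).substApp F) := rfl

lemma iterApp_app (σ : Subst Sig ar Vr) (k : ℕ) (f : Sig) (ts : Fin (ar f) → HTerm Sig ar Vr) :
    σ.iterApp k (HTerm.app f ts) = HTerm.app f (fun i => σ.iterApp k (ts i)) := by
  induction k with
  | zero => rfl
  | succ k ih =>
      rw [iterApp_succ', ih, substApp_app]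
      congr 1
      funext i
      rw [iterApp_succ']

lemma not_mem_dom_iff {σ : Subst Sig ar Vr} {x : Vr} :
    x ∉ σ.dom ↔ σ.toFun x = HTerm.var x := by
  simp [Subst.dom]

lemma iterApp_var_of_not_mem_dom {σ : Subst Sig ar Vr} {x : Vr} (h : x ∉ σ.dom) (k : ℕ) :
    σ.iterApp k (HTerm.var x) = HTerm.var x := by
  induction k with
  | zero => rfl
  | succ k ih => rw [iterApp_succ', ih, substApp_var, not_mem_dom_iff.mp h]

lemma mem_vars_var {x z : Vr} :
    z ∈ (HTerm.var (Sig := Sig) (ar := ar) x).vars ↔ z = x := by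
  simp [HTerm.vars]

lemma mem_vars_app {f : Sig} {ts : Fin (ar f) → HTerm Sig ar Vr} {z : Vr} :
    z ∈ (HTerm.app f ts).vars ↔ ∃ i, z ∈ (ts i).vars := by
  simp [HTerm.vars]

lemma count_var (x z : Vr) :
    (HTerm.var (Sig := Sig) (ar := ar) x).count z = if x = z then 1 else 0 := rfl

lemma count_app (f : Sig) (ts : Fin (ar f) → HTerm Sig ar Vr) (z : Vr) :
    (HTerm.app f ts).count z = ∑ i, (ts i).count z := rfl

lemma count_var_le_one (x z : Vr) :
    (HTerm.var (Sig := Sig) (ar := ar) x).count z ≤ 1 := by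
  rw [count_var]; split <;> omega

lemma mem_vars_iff_count_pos (t : HTerm Sig ar Vr) (z : Vr) :
    z ∈ t.vars ↔ 0 < t.count z := by
  induction t with
  | var x =>
      rw [mem_vars_var, count_var]
      constructor
      · rintro rfl; simp
      · intro h; by_contra hne; rw [if_neg (fun h' => hne h'.symm)] at h; omega
  | app f ts ih =>
      rw [mem_vars_app, count_app]
      have h2 : (0 < ∑ i, (ts i).count z) ↔ ∃ i, 0 < (ts i).count z := by
        rw [Nat.pos_iff_ne_zero, Ne, Finset.sum_eq_zero_iff]
        push_neg
        simp [Nat.pos_iff_ne_zero]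
      rw [h2]
      exact exists_congr ih

lemma count_substApp_ge {σ : Subst Sig ar Vr} {z : Vr} (hz : z ∉ σ.dom)
    (t : HTerm Sig ar Vr) : t.count z ≤ (t.substApp σ.toFun).count z := by
  induction t with
  | var x =>
      by_cases hx : x = z
      · subst hx
        rw [substApp_var, not_mem_dom_iff.mp hz, count_var, if_pos rfl]
      · rw [count_var, if_neg hx]; omega
  | app f ts ih =>
      rw [substApp_app, count_app, count_app]
      exact Finset.sum_le_sum (fun i _ => ih i)

lemma count_iterApp_mono {σ : Subst Sig ar Vr} {z : Vr} (hz : z ∉ σ.dom)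
    (t : HTerm Sig ar Vr) {k k' : ℕ} (h : k ≤ k') :
    (σ.iterApp k t).count z ≤ (σ.iterApp k' t).count z := by
  induction h with
  | refl => exact le_refl _
  | step h ih =>
      refine le_trans ih ?_
      rw [iterApp_succ']
      exact count_substApp_ge hz _

lemma count_iterApp_le_of_mem_vars {σ : Subst Sig ar Vr} {z w : Vr}
    (s : HTerm Sig ar Vr) (hw : w ∈ s.vars) (k : ℕ) :
    (σ.iterApp k (HTerm.var w)).count z ≤ (σ.iterApp k s).count z := by
  induction s with
  | var x =>
      obtain rfl : w = x := mem_vars_var.mp hw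
      exact le_refl _
  | app f ts ih =>
      obtain ⟨i, hi⟩ := mem_vars_app.mp hw
      refine le_trans (ih i hi) ?_
      rw [iterApp_app, count_app]
      exact Finset.single_le_sum (f := fun l => (σ.iterApp k (ts l)).count z)
        (fun j _ => Nat.zero_le _) (Finset.mem_univ i)

lemma pair_le_sum {n : ℕ} (g : Fin n → ℕ) {i j : Fin n} (hij : i ≠ j) :
    g i + g j ≤ ∑ l, g l := by
  classical
  have h1 : ({i, j} : Finset (Fin n)).sum g = g i + g j := Finset.sum_pair hij
  rw [← h1]
  exact Finset.sum_le_sum_of_subset (Finset.subset_univ _)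

lemma sum_two_cases {n : ℕ} (g : Fin n → ℕ) (h : 2 ≤ ∑ i, g i) :
    (∃ i, 2 ≤ g i) ∨ ∃ i j, i ≠ j ∧ 1 ≤ g i ∧ 1 ≤ g j := by
  classical
  by_contra hc
  push_neg at hc
  obtain ⟨h1, h2⟩ := hc
  by_cases hex : ∃ i, 1 ≤ g i
  · obtain ⟨i₀, hi₀⟩ := hex
    have hz : ∀ j ∈ Finset.univ, j ≠ i₀ → g j = 0 := by
      intro j _ hj
      have := h2 i₀ j (fun h' => hj (h'.symm)) hi₀
      omega
    have : ∑ i, g i = g i₀ := Finset.sum_eq_single_of_mem i₀ (Finset.mem_univ _) hz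
    have := h1 i₀
    omega
  · push_neg at hex
    have : ∑ i, g i = 0 := Finset.sum_eq_zero (fun i _ => by have := hex i; omega)
    omega

lemma count_iterApp_two_of_count {σ : Subst Sig ar Vr} {z w : Vr}
    (s : HTerm Sig ar Vr) (hw : 2 ≤ s.count w) (k : ℕ) :
    2 * (σ.iterApp k (HTerm.var w)).count z ≤ (σ.iterApp k s).count z := by
  induction s with
  | var x => have := count_var_le_one (Sig := Sig) (ar := ar) x w; omega
  | app f ts ih =>
      rw [count_app] at hw
      rcases sum_two_cases _ hw with ⟨i, hi⟩ | ⟨i, j, hij, hi, hj⟩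
      · refine le_trans (ih i hi) ?_
        rw [iterApp_app, count_app]
        exact Finset.single_le_sum (f := fun l => (σ.iterApp k (ts l)).count z)
          (fun j _ => Nat.zero_le _) (Finset.mem_univ i)
      · have h1 : w ∈ (ts i).vars := (mem_vars_iff_count_pos _ _).mpr (by omega)
        have h2 : w ∈ (ts j).vars := (mem_vars_iff_count_pos _ _).mpr (by omega)
        have := add_le_add (count_iterApp_le_of_mem_vars (σ := σ) (z := z) (ts i) h1 k)
          (count_iterApp_le_of_mem_vars (σ := σ) (z := z) (ts j) h2 k)
        rw [iterApp_app, count_app]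
        calc 2 * (σ.iterApp k (HTerm.var w)).count z
            = (σ.iterApp k (HTerm.var w)).count z + (σ.iterApp k (HTerm.var w)).count z := by ring
          _ ≤ (σ.iterApp k (ts i)).count z + (σ.iterApp k (ts j)).count z := this
          _ ≤ _ := pair_le_sum (fun l => (σ.iterApp k (ts l)).count z) hij

lemma count_iterApp_two_of_two_vars {σ : Subst Sig ar Vr} {z w₁ w₂ : Vr} (hw : w₁ ≠ w₂)
    (s : HTerm Sig ar Vr) (h₁ : w₁ ∈ s.vars) (h₂ : w₂ ∈ s.vars) (k : ℕ) :
    (σ.iterApp k (HTerm.var w₁)).count z + (σ.iterApp k (HTerm.var w₂)).count z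
      ≤ (σ.iterApp k s).count z := by
  induction s with
  | var x =>
      have e1 : w₁ = x := mem_vars_var.mp h₁
      have e2 : w₂ = x := mem_vars_var.mp h₂
      exact absurd (e1.trans e2.symm) hw
  | app f ts ih =>
      obtain ⟨i, hi⟩ := mem_vars_app.mp h₁
      obtain ⟨j, hj⟩ := mem_vars_app.mp h₂
      rw [iterApp_app, count_app]
      by_cases hijeq : i = j
      · subst hijeq
        refine le_trans (ih i hi hj) ?_
        exact Finset.single_le_sum (f := fun l => (σ.iterApp k (ts l)).count z)
          (fun j _ => Nat.zero_le _) (Finset.mem_univ i)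
      · refine le_trans (add_le_add (count_iterApp_le_of_mem_vars (σ := σ) (z := z) (ts i) hi k)
          (count_iterApp_le_of_mem_vars (σ := σ) (z := z) (ts j) hj k)) ?_
        exact pair_le_sum (fun l => (σ.iterApp k (ts l)).count z) hijeq

lemma exists_var_of_count_pos {σ : Subst Sig ar Vr} {z : Vr}
    (s : HTerm Sig ar Vr) (k : ℕ) (h : 1 ≤ (σ.iterApp k s).count z) :
    ∃ w ∈ s.vars, 1 ≤ (σ.iterApp k (HTerm.var w)).count z := by
  induction s with
  | var x => exact ⟨x, mem_vars_var.mpr rfl, h⟩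
  | app f ts ih =>
      rw [iterApp_app, count_app] at h
      have : ∃ i, 1 ≤ (σ.iterApp k (ts i)).count z := by
        by_contra hc
        push_neg at hc
        have : ∑ i, (σ.iterApp k (ts i)).count z = 0 :=
          Finset.sum_eq_zero (fun i _ => by have := hc i; omega)
        omega
      obtain ⟨i, hi⟩ := this
      obtain ⟨w, hw, hwc⟩ := ih i hi
      exact ⟨w, mem_vars_app.mpr ⟨i, hw⟩, hwc⟩

lemma decomp_two {σ : Subst Sig ar Vr} {z : Vr}
    (s : HTerm Sig ar Vr) (k : ℕ) (h : 2 ≤ (σ.iterApp k s).count z) :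
    (∃ w ∈ s.vars, 2 ≤ (σ.iterApp k (HTerm.var w)).count z) ∨
    (∃ w, 2 ≤ s.count w ∧ 1 ≤ (σ.iterApp k (HTerm.var w)).count z) ∨
    (∃ w₁ w₂, w₁ ≠ w₂ ∧ w₁ ∈ s.vars ∧ w₂ ∈ s.vars ∧
      1 ≤ (σ.iterApp k (HTerm.var w₁)).count z ∧ 1 ≤ (σ.iterApp k (HTerm.var w₂)).count z) := by
  induction s with
  | var x => exact Or.inl ⟨x, mem_vars_var.mpr rfl, h⟩
  | app f ts ih =>
      rw [iterApp_app, count_app] at h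
      rcases sum_two_cases _ h with ⟨i, hi⟩ | ⟨i, j, hij, hi, hj⟩
      · rcases ih i hi with ⟨w, hw, h2⟩ | ⟨w, hc, h1⟩ | ⟨w₁, w₂, hne, hv₁, hv₂, hc₁, hc₂⟩
        · exact Or.inl ⟨w, mem_vars_app.mpr ⟨i, hw⟩, h2⟩
        · refine Or.inr (Or.inl ⟨w, ?_, h1⟩)
          refine le_trans hc ?_
          rw [count_app]
          exact Finset.single_le_sum (f := fun l => (ts l).count w)
            (fun j _ => Nat.zero_le _) (Finset.mem_univ i)
        · exact Or.inr (Or.inr ⟨w₁, w₂, hne, mem_vars_app.mpr ⟨i, hv₁⟩,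
            mem_vars_app.mpr ⟨i, hv₂⟩, hc₁, hc₂⟩)
      · obtain ⟨w₁, hw₁v, hw₁c⟩ := exists_var_of_count_pos (ts i) k hi
        obtain ⟨w₂, hw₂v, hw₂c⟩ := exists_var_of_count_pos (ts j) k hj
        by_cases hw : w₁ = w₂
        · subst hw
          refine Or.inr (Or.inl ⟨w₁, ?_, hw₁c⟩)
          have c₁ : 1 ≤ (ts i).count w₁ := (mem_vars_iff_count_pos _ _).mp hw₁v
          have c₂ : 1 ≤ (ts j).count w₁ := (mem_vars_iff_count_pos _ _).mp hw₂v
          have hps : (ts i).count w₁ + (ts j).count w₁ ≤ (HTerm.app f ts).count w₁ := by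
            rw [count_app]
            exact pair_le_sum (fun l => (ts l).count w₁) hij
          omega
        · exact Or.inr (Or.inr ⟨w₁, w₂, hw, mem_vars_app.mpr ⟨i, hw₁v⟩,
            mem_vars_app.mpr ⟨j, hw₂v⟩, hw₁c, hw₂c⟩)

end AuxSyn
section AuxStab

open HTerm

variable {Sig : Type} {ar : Sig → ℕ} {Vr : Type}

lemma reach_min_bound {σ : Subst Sig ar Vr} {z : Vr} :
    ∀ k : ℕ, ∀ u : Vr, 1 ≤ ((σ.iterApp k (HTerm.var u)).count z) →
      (∀ j, j < k → (σ.iterApp j (HTerm.var u)).count z = 0) →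
      ∃ xs : Finset Vr, xs ⊆ σ.finite_dom.toFinset ∧
        (∀ x ∈ xs, ∃ j, j ≤ k ∧ 1 ≤ (σ.iterApp j (HTerm.var x)).count z ∧
          ∀ j' < j, (σ.iterApp j' (HTerm.var x)).count z = 0) ∧
        k ≤ xs.card := by
  intro k
  induction k with
  | zero =>
      intro u _ _
      exact ⟨∅, by simp, by simp, by simp⟩
  | succ k IH =>
      intro u h1 hmin
      have hudom : u ∈ σ.dom := by
        by_contra hu
        have h0 := hmin 0 (Nat.succ_pos _)
        rw [iterApp_var_of_not_mem_dom hu] at h1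
        rw [iterApp_zero] at h0
        omega
      have h1' : 1 ≤ (σ.iterApp k (σ.toFun u)).count z := by
        rwa [iterApp_succ, substApp_var] at h1
      obtain ⟨w, hwv, hw1⟩ := exists_var_of_count_pos (σ.toFun u) k h1'
      have hwmin : ∀ j' < k, (σ.iterApp j' (HTerm.var w)).count z = 0 := by
        intro j' hj'
        by_contra hc
        have h1w : 1 ≤ (σ.iterApp j' (HTerm.var w)).count z := by omega
        have hst : 1 ≤ (σ.iterApp (j' + 1) (HTerm.var u)).count z := by
          rw [iterApp_succ, substApp_var]
          exact le_trans h1w (count_iterApp_le_of_mem_vars _ hwv _)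
        have := hmin (j' + 1) (by omega)
        omega
      obtain ⟨xs, hsub, hprops, hcard⟩ := IH w hw1 hwmin
      have hu_not : u ∉ xs := by
        intro hu
        obtain ⟨j, hjk, hj1, _⟩ := hprops u hu
        have := hmin j (by omega)
        omega
      refine ⟨insert u xs, ?_, ?_, ?_⟩
      · intro x hx
        rcases Finset.mem_insert.mp hx with rfl | hx
        · exact (Set.Finite.mem_toFinset _).mpr hudom
        · exact hsub hx
      · intro x hx
        rcases Finset.mem_insert.mp hx with rfl | hx
        · exact ⟨k + 1, le_refl _, h1, hmin⟩
        · obtain ⟨j, hjk, a, b⟩ := hprops x hx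
          exact ⟨j, by omega, a, b⟩
      · rw [Finset.card_insert_of_notMem hu_not]
        omega

lemma stab {σ : Subst Sig ar Vr} {z : Vr} (hz : z ∉ σ.dom) (k : ℕ) (u : Vr)
    (h : 1 ≤ (σ.iterApp k (HTerm.var u)).count z) :
    1 ≤ (σ.iterApp σ.nb (HTerm.var u)).count z := by
  have hex : ∃ j, 1 ≤ (σ.iterApp j (HTerm.var u)).count z := ⟨k, h⟩
  have hspec := Nat.find_spec hex
  have hmin : ∀ j < Nat.find hex, (σ.iterApp j (HTerm.var u)).count z = 0 := by
    intro j hj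
    have := Nat.find_min hex hj
    omega
  obtain ⟨xs, hsub, _, hcard⟩ := reach_min_bound (Nat.find hex) u hspec hmin
  have hc2 : xs.card ≤ σ.nb := Finset.card_le_card hsub
  exact le_trans hspec (count_iterApp_mono hz _ (by omega))

lemma dup_min_bound {σ : Subst Sig ar Vr} {z : Vr} (hz : z ∉ σ.dom) :
    ∀ k : ℕ, ∀ u : Vr, 2 ≤ (σ.iterApp k (HTerm.var u)).count z →
      (∀ j < k, (σ.iterApp j (HTerm.var u)).count z ≤ 1) →
      ∃ xs : Finset Vr, xs ⊆ σ.finite_dom.toFinset ∧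
        (∀ x ∈ xs, ∃ j, j ≤ k ∧ 2 ≤ (σ.iterApp j (HTerm.var x)).count z ∧
          ∀ j' < j, (σ.iterApp j' (HTerm.var x)).count z ≤ 1) ∧
        u ∈ xs ∧ k ≤ σ.nb + xs.card := by
  intro k
  induction k with
  | zero =>
      intro u h2 _
      exfalso
      rw [iterApp_zero] at h2
      have := count_var_le_one (Sig := Sig) (ar := ar) u z
      omega
  | succ k IH =>
      intro u h2 hmin
      have hudom : u ∈ σ.dom := by
        by_contra hu
        rw [iterApp_var_of_not_mem_dom hu] at h2
        have := count_var_le_one (Sig := Sig) (ar := ar) u z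
        omega
      by_cases hksmall : k + 1 ≤ σ.nb + 1
      · refine ⟨{u}, ?_, ?_, Finset.mem_singleton_self u, ?_⟩
        · intro x hx
          rw [Finset.mem_singleton] at hx
          subst hx
          exact (Set.Finite.mem_toFinset _).mpr hudom
        · intro x hx
          rw [Finset.mem_singleton] at hx
          subst hx
          exact ⟨k + 1, le_refl _, h2, hmin⟩
        · rw [Finset.card_singleton]
          omega
      · have h2' : 2 ≤ (σ.iterApp k (σ.toFun u)).count z := by
          rwa [iterApp_succ, substApp_var] at h2
        rcases decomp_two (σ.toFun u) k h2' with ⟨w, hwv, hw2⟩ | ⟨w, hwc, hw1⟩ |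
          ⟨w₁, w₂, hne, hv₁, hv₂, hc₁, hc₂⟩
        · have hwmin : ∀ j' < k, (σ.iterApp j' (HTerm.var w)).count z ≤ 1 := by
            intro j' hj'
            by_contra hc
            have hc' : 2 ≤ (σ.iterApp j' (HTerm.var w)).count z := by omega
            have hst : 2 ≤ (σ.iterApp (j' + 1) (HTerm.var u)).count z := by
              rw [iterApp_succ, substApp_var]
              exact le_trans hc' (count_iterApp_le_of_mem_vars _ hwv _)
            have := hmin (j' + 1) (by omega)
            omega
          obtain ⟨xs, hsub, hprops, hwin, hcard⟩ := IH w hw2 hwmin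
          have hu_not : u ∉ xs := by
            intro hu
            obtain ⟨j, hjk, hj2, _⟩ := hprops u hu
            have := hmin j (by omega)
            omega
          refine ⟨insert u xs, ?_, ?_, Finset.mem_insert_self _ _, ?_⟩
          · intro x hx
            rcases Finset.mem_insert.mp hx with rfl | hx
            · exact (Set.Finite.mem_toFinset _).mpr hudom
            · exact hsub hx
          · intro x hx
            rcases Finset.mem_insert.mp hx with rfl | hx
            · exact ⟨k + 1, le_refl _, h2, hmin⟩
            · obtain ⟨j, hjk, a, b⟩ := hprops x hx
              exact ⟨j, by omega, a, b⟩
          · rw [Finset.card_insert_of_notMem hu_not]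
            omega
        · exfalso
          have hs : 1 ≤ (σ.iterApp σ.nb (HTerm.var w)).count z := stab hz k w hw1
          have hbig : 2 ≤ (σ.iterApp (σ.nb + 1) (HTerm.var u)).count z := by
            rw [iterApp_succ, substApp_var]
            have := count_iterApp_two_of_count (σ := σ) (z := z) (σ.toFun u) hwc σ.nb
            omega
          have := hmin (σ.nb + 1) (by omega)
          omega
        · exfalso
          have hs₁ : 1 ≤ (σ.iterApp σ.nb (HTerm.var w₁)).count z := stab hz k w₁ hc₁
          have hs₂ : 1 ≤ (σ.iterApp σ.nb (HTerm.var w₂)).count z := stab hz k w₂ hc₂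
          have hbig : 2 ≤ (σ.iterApp (σ.nb + 1) (HTerm.var u)).count z := by
            rw [iterApp_succ, substApp_var]
            have := count_iterApp_two_of_two_vars (σ := σ) (z := z) hne (σ.toFun u) hv₁ hv₂ σ.nb
            omega
          have := hmin (σ.nb + 1) (by omega)
          omega

lemma dup_stab {σ : Subst Sig ar Vr} {z : Vr} (hz : z ∉ σ.dom) (k : ℕ) (u : Vr)
    (h : 2 ≤ (σ.iterApp k (HTerm.var u)).count z) :
    2 ≤ (σ.iterApp (2 * σ.nb) (HTerm.var u)).count z := by
  have hex : ∃ j, 2 ≤ (σ.iterApp j (HTerm.var u)).count z := ⟨k, h⟩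
  have hspec := Nat.find_spec hex
  have hmin : ∀ j < Nat.find hex, (σ.iterApp j (HTerm.var u)).count z ≤ 1 := by
    intro j hj
    have := Nat.find_min hex hj
    omega
  obtain ⟨xs, hsub, _, _, hcard⟩ := dup_min_bound hz (Nat.find hex) u hspec hmin
  have hc2 : xs.card ≤ σ.nb := Finset.card_le_card hsub
  exact le_trans hspec (count_iterApp_mono hz _ (by omega))

end AuxStab
section AuxCycle

open HTerm

variable {Sig : Type} {ar : Sig → ℕ} {Vr : Type}

lemma no_infinite_var_chain {σ : Subst Sig ar Vr} (hσ : σ.IsRSubst) (g : ℕ → Vr)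
    (hdom : ∀ k, g k ∈ σ.dom) (hstep : ∀ k, σ.toFun (g k) = HTerm.var (g (k + 1))) :
    False := by
  apply hσ
  have hmap : ∀ i : Fin (σ.nb + 1), g i.1 ∈ σ.finite_dom.toFinset :=
    fun i => (Set.Finite.mem_toFinset _).mpr (hdom i.1)
  have hcardlt : Fintype.card {x // x ∈ σ.finite_dom.toFinset} < Fintype.card (Fin (σ.nb + 1)) := by
    rw [Fintype.card_coe, Fintype.card_fin]
    exact Nat.lt_succ_self _
  obtain ⟨i, j, hij, heqv⟩ := Fintype.exists_ne_map_eq_of_card_lt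
    (fun i : Fin (σ.nb + 1) => (⟨g i.1, hmap i⟩ : {x // x ∈ σ.finite_dom.toFinset})) hcardlt
  have heq : g i.1 = g j.1 := congrArg Subtype.val heqv
  have hQ : ∃ m : ℕ, ∃ l, l < m ∧ g l = g m := by
    rcases Nat.lt_or_ge i.1 j.1 with h | h
    · exact ⟨j.1, i.1, h, heq⟩
    · have h' : j.1 < i.1 := by
        rcases Nat.lt_or_ge j.1 i.1 with h' | h'
        · exact h'
        · exact absurd (Fin.ext (by omega)) hij
      exact ⟨i.1, j.1, h', heq.symm⟩
  classical
  set j₀ := Nat.find hQ with hj₀def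
  obtain ⟨i₀, hi₀lt, hi₀eq⟩ := Nat.find_spec hQ
  set n := j₀ - i₀ with hndef
  have hn1 : 1 ≤ n := by omega
  have hi₀n : i₀ + n = j₀ := by omega
  have hne1 : n ≠ 1 := by
    intro h1
    have : g (i₀ + 1) = g i₀ := by
      have : i₀ + 1 = j₀ := by omega
      rw [this, ← hi₀eq]
    have hstep' := hstep i₀
    rw [this] at hstep'
    exact hdom i₀ hstep'
  refine ⟨n, by omega, fun l => g (i₀ + l.1), ?_, ?_⟩
  · intro l₁ l₂ hl
    by_contra hne
    have hne' : l₁.1 ≠ l₂.1 := fun h => hne (Fin.ext h)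
    rcases Nat.lt_or_ge l₁.1 l₂.1 with h | h
    · have hlt : i₀ + l₂.1 < j₀ := by have := l₂.2; omega
      exact Nat.find_min hQ hlt ⟨i₀ + l₁.1, by omega, hl⟩
    · have h' : l₂.1 < l₁.1 := by omega
      have hlt : i₀ + l₁.1 < j₀ := by have := l₁.2; omega
      exact Nat.find_min hQ hlt ⟨i₀ + l₂.1, by omega, hl.symm⟩
  · intro l
    have hstep' := hstep (i₀ + l.1)
    rcases Nat.lt_or_ge (l.1 + 1) n with h | h
    · have hmod : (l.1 + 1) % n = l.1 + 1 := Nat.mod_eq_of_lt h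
      rw [hstep']
      congr 2
      simp only [hmod]
      omega
    · have hl1 : l.1 + 1 = n := by have := l.2; omega
      have hmod : (l.1 + 1) % n = 0 := by rw [hl1, Nat.mod_self]
      have harg : i₀ + l.1 + 1 = j₀ := by omega
      rw [hstep', harg, ← hi₀eq]
      congr 2
      simp only [hmod]
      omega

lemma var_chase {σ : Subst Sig ar Vr} (hσ : σ.IsRSubst) (u : Vr) :
    ∃ k, (∃ w, σ.iterApp k (HTerm.var u) = HTerm.var w ∧ w ∉ σ.dom) ∨
         (∃ f ts, σ.iterApp k (HTerm.var u) = HTerm.app f ts) := by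
  by_contra hc
  have hstate : ∀ k, ∃ w, σ.iterApp k (HTerm.var u) = HTerm.var w ∧ w ∈ σ.dom := by
    intro k
    cases hsh : σ.iterApp k (HTerm.var u) with
    | var w =>
        refine ⟨w, rfl, ?_⟩
        by_contra hw
        exact hc ⟨k, Or.inl ⟨w, hsh, hw⟩⟩
    | app f ts => exact absurd ⟨k, Or.inr ⟨f, ts, hsh⟩⟩ hc
  classical
  have hgvar : ∀ k, σ.iterApp k (HTerm.var u) = HTerm.var ((hstate k).choose) :=
    fun k => ((hstate k).choose_spec).1
  have hgdom : ∀ k, (hstate k).choose ∈ σ.dom := fun k => ((hstate k).choose_spec).2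
  refine no_infinite_var_chain hσ (fun k => (hstate k).choose) hgdom ?_
  intro k
  have h1 : σ.iterApp (k + 1) (HTerm.var u) = σ.toFun ((hstate k).choose) := by
    rw [iterApp_succ']
    exact (congrArg (HTerm.substApp σ.toFun) (hgvar k)).trans (substApp_var _ _)
  rw [← h1]
  exact hgvar (k + 1)

lemma nondom_of_iter_nb_var {σ : Subst Sig ar Vr} (hσ : σ.IsRSubst) {y z : Vr}
    (h : σ.iterApp σ.nb (HTerm.var y) = HTerm.var z) : z ∉ σ.dom := by
  classical
  have hvar : ∀ k, k ≤ σ.nb → ∃ w, σ.iterApp k (HTerm.var y) = HTerm.var w := by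
    intro k hk
    cases hsh : σ.iterApp k (HTerm.var y) with
    | var w => exact ⟨w, rfl⟩
    | app f ts =>
        exfalso
        have hnb : σ.nb = (σ.nb - k) + k := by omega
        rw [hnb, iterApp_add, hsh, iterApp_app] at h
        cases h
  set g : ℕ → Vr := fun k => if hk : k ≤ σ.nb then (hvar k hk).choose else z with hgdef
  have hg : ∀ k, (hk : k ≤ σ.nb) → σ.iterApp k (HTerm.var y) = HTerm.var (g k) := by
    intro k hk
    simp only [hgdef, dif_pos hk]
    exact (hvar k hk).choose_spec
  have hglast : g σ.nb = z := by
    have := hg σ.nb (le_refl _)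
    rw [h] at this
    exact (HTerm.var.injEq _ _).mp this.symm
  have hstep : ∀ k, k < σ.nb → σ.toFun (g k) = HTerm.var (g (k + 1)) := by
    intro k hk
    have h1 : σ.iterApp (k + 1) (HTerm.var y) = σ.toFun (g k) := by
      rw [iterApp_succ', hg k (by omega), substApp_var]
    rw [← h1, hg (k + 1) (by omega)]
  by_contra hzdom
  by_cases hA : ∃ k, k ≤ σ.nb ∧ g k ∉ σ.dom
  · obtain ⟨k, hk, hknd⟩ := hA
    have : g σ.nb = g k := by
      have h1 : σ.iterApp σ.nb (HTerm.var y) = HTerm.var (g k) := by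
        have hnb : σ.nb = (σ.nb - k) + k := by omega
        rw [hnb, iterApp_add, hg k hk, iterApp_var_of_not_mem_dom hknd]
      have h2 := hg σ.nb (le_refl _)
      rw [h1] at h2
      exact ((HTerm.var.injEq _ _).mp h2).symm
    rw [hglast] at this
    rw [this] at hzdom
    exact hknd hzdom
  · push_neg at hA
    have hBdom : ∀ k, k ≤ σ.nb → g k ∈ σ.dom := hA
    -- pigeonhole on Fin (σ.nb + 1)
    have hmap : ∀ i : Fin (σ.nb + 1), g i.1 ∈ σ.finite_dom.toFinset :=
      fun i => (Set.Finite.mem_toFinset _).mpr (hBdom i.1 (by omega))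
    have hcardlt : Fintype.card {x // x ∈ σ.finite_dom.toFinset} < Fintype.card (Fin (σ.nb + 1)) := by
      rw [Fintype.card_coe, Fintype.card_fin]
      exact Nat.lt_succ_self _
    obtain ⟨i, j, hij, heqv⟩ := Fintype.exists_ne_map_eq_of_card_lt
      (fun i : Fin (σ.nb + 1) => (⟨g i.1, hmap i⟩ : {x // x ∈ σ.finite_dom.toFinset})) hcardlt
    have heq : g i.1 = g j.1 := congrArg Subtype.val heqv
    -- wlog i < j
    obtain ⟨a, b, hab, hble, hgab⟩ : ∃ a b : ℕ, a < b ∧ b ≤ σ.nb ∧ g a = g b := by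
      rcases Nat.lt_or_ge i.1 j.1 with hlt | hge
      · exact ⟨i.1, j.1, hlt, by have := j.2; omega, heq⟩
      · have h' : j.1 < i.1 := by
          rcases Nat.lt_or_ge j.1 i.1 with h' | h'
          · exact h'
          · exact absurd (Fin.ext (by omega)) hij
        exact ⟨j.1, i.1, h', by have := i.2; omega, heq.symm⟩
    set p := b - a with hpdef
    have hp1 : 1 ≤ p := by omega
    by_cases hp : p = 1
    · have hg1 : g (a + 1) = g a := by
        have : a + 1 = b := by omega
        rw [this, ← hgab]
      have hstep' := hstep a (by omega)
      rw [hg1] at hstep'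
      exact hBdom a (by omega) hstep'
    · have hp2 : 2 ≤ p := by omega
      refine no_infinite_var_chain hσ (fun l => g (a + l % p)) ?_ ?_
      · intro l
        have hr : l % p < p := Nat.mod_lt _ (by omega)
        exact hBdom (a + l % p) (by omega)
      · intro l
        have hr : l % p < p := Nat.mod_lt _ (by omega)
        have hmod1 : (l + 1) % p = (l % p + 1) % p := by
          conv_lhs => rw [Nat.add_mod]
          rw [Nat.mod_eq_of_lt (show 1 < p by omega)]
        rcases Nat.lt_or_ge (l % p + 1) p with hlt | hge
        · have hmod2 : (l + 1) % p = l % p + 1 := by rw [hmod1, Nat.mod_eq_of_lt hlt]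
          have hstep' := hstep (a + l % p) (by omega)
          rw [hstep']
          simp only [hmod2]
          congr 2
        · have hrp : l % p + 1 = p := by omega
          have hmod2 : (l + 1) % p = 0 := by rw [hmod1, hrp, Nat.mod_self]
          have hstep' := hstep (a + l % p) (by omega)
          have harg : a + l % p + 1 = b := by omega
          rw [hstep', harg, ← hgab]
          simp only [hmod2]
          congr 2
section AuxSem

open HTerm

variable {Sig : Type} {ar : Sig → ℕ} {Vr : Type}

lemma eval_substApp_of_sat {M : Interp Sig ar} {ν : Vr → M.carrier} {σ : Subst Sig ar Vr}
    (hν : M.SatEqs ν (eqsOf σ)) (t : HTerm Sig ar Vr) :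
    M.eval ν (t.substApp σ.toFun) = M.eval ν t := by
  induction t with
  | var x =>
      by_cases hx : x ∈ σ.dom
      · have h := hν (HTerm.var x, σ.toFun x) ⟨x, hx, rfl⟩
        rw [substApp_var]
        exact h.symm
      · rw [substApp_var, not_mem_dom_iff.mp hx]
  | app f ts ih =>
      rw [substApp_app]
      show M.interp f _ = M.interp f _
      congr 1
      funext i
      exact ih i

lemma eval_iterApp_of_sat {M : Interp Sig ar} {ν : Vr → M.carrier} {σ : Subst Sig ar Vr}
    (hν : M.SatEqs ν (eqsOf σ)) (k : ℕ) (t : HTerm Sig ar Vr) :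
    M.eval ν (σ.iterApp k t) = M.eval ν t := by
  induction k with
  | zero => rfl
  | succ k ih => rw [iterApp_succ', eval_substApp_of_sat hν, ih]

/-- A bundled context for the semantic arguments. -/
structure EqCtx (Sig Vr : Type) (ar : Sig → ℕ) : Type 1 where
  M : Interp Sig ar
  hid : M.SatisfiesIdentity
  σ : Subst Sig ar Vr
  τ : Subst Sig ar Vr
  hσR : σ.IsRSubst
  hτR : τ.IsRSubst
  Sol : (Vr → M.carrier) → Prop
  hsolσ : ∀ ν, Sol ν → M.SatEqs ν (eqsOf σ)
  hsolτ : ∀ ν, Sol ν → M.SatEqs ν (eqsOf τ)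
  extσ : ∀ β : Vr → M.carrier, ∃ ν, (∀ x, x ∉ σ.dom → ν x = β x) ∧ Sol ν
  extτ : ∀ β : Vr → M.carrier, ∃ ν, (∀ x, x ∉ τ.dom → ν x = β x) ∧ Sol ν
  A : M.carrier
  B : M.carrier
  hAB : A ≠ B
  headAB : ∀ (f : Sig) (xs ys : Fin (ar f) → M.carrier),
      M.interp f xs = A → M.interp f ys = B → False

namespace EqCtx

variable (C : EqCtx Sig Vr ar)

/-- Swap the roles of σ and τ. -/
def swap : EqCtx Sig Vr ar where
  M := C.M
  hid := C.hid
  σ := C.τ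
  τ := C.σ
  hσR := C.hτR
  hτR := C.hσR
  Sol := C.Sol
  hsolσ := C.hsolτ
  hsolτ := C.hsolσ
  extσ := C.extτ
  extτ := C.extσ
  A := C.A
  B := C.B
  hAB := C.hAB
  headAB := C.headAB

lemma exists_sol : ∃ ν, C.Sol ν := by
  obtain ⟨ν, _, h⟩ := C.extτ (fun _ => C.A)
  exact ⟨ν, h⟩

lemma eval_iterσ {ν} (hν : C.Sol ν) (k : ℕ) (t : HTerm Sig ar Vr) :
    C.M.eval ν (C.σ.iterApp k t) = C.M.eval ν t :=
  eval_iterApp_of_sat (C.hsolσ ν hν) k t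

lemma eval_iterτ {ν} (hν : C.Sol ν) (k : ℕ) (t : HTerm Sig ar Vr) :
    C.M.eval ν (C.τ.iterApp k t) = C.M.eval ν t :=
  eval_iterApp_of_sat (C.hsolτ ν hν) k t

lemma realizeσ {v : Vr} (hv : v ∉ C.σ.dom) (c : C.M.carrier) :
    ∃ ν, C.Sol ν ∧ ν v = c := by
  obtain ⟨ν, hag, hsol⟩ := C.extσ (fun _ => c)
  exact ⟨ν, hsol, hag v hv⟩

lemma realizeτ {v : Vr} (hv : v ∉ C.τ.dom) (c : C.M.carrier) :
    ∃ ν, C.Sol ν ∧ ν v = c := by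
  obtain ⟨ν, hag, hsol⟩ := C.extτ (fun _ => c)
  exact ⟨ν, hsol, hag v hv⟩

lemma sepτ {u₁ u₂ : Vr} (h : u₁ ≠ u₂) (h₁ : u₁ ∉ C.τ.dom) (h₂ : u₂ ∉ C.τ.dom) :
    ∃ ν, C.Sol ν ∧ ν u₁ ≠ ν u₂ := by
  classical
  obtain ⟨ν, hag, hsol⟩ := C.extτ (fun w => if w = u₁ then C.A else C.B)
  refine ⟨ν, hsol, ?_⟩
  rw [hag u₁ h₁, hag u₂ h₂, if_pos rfl, if_neg (fun hh => h hh.symm)]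
  exact C.hAB

lemma rep_uniqueτ {u₁ u₂ : Vr} (h₁ : u₁ ∉ C.τ.dom) (h₂ : u₂ ∉ C.τ.dom)
    (hval : ∀ ν, C.Sol ν → ν u₁ = ν u₂) : u₁ = u₂ := by
  by_contra hne
  obtain ⟨ν, hsol, hneq⟩ := C.sepτ hne h₁ h₂
  exact hneq (hval ν hsol)

lemma headconσ {u : Vr} (hu : u ∉ C.σ.dom) (f : Sig) (ts : Fin (ar f) → HTerm Sig ar Vr)
    (h : ∀ ν, C.Sol ν → ν u = C.M.eval ν (HTerm.app f ts)) : False := by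
  obtain ⟨νA, hsolA, hA⟩ := C.realizeσ hu C.A
  obtain ⟨νB, hsolB, hB⟩ := C.realizeσ hu C.B
  have h1 : C.M.interp f (fun i => C.M.eval νA (ts i)) = C.A := by
    rw [← hA]; exact (h νA hsolA).symm
  have h2 : C.M.interp f (fun i => C.M.eval νB (ts i)) = C.B := by
    rw [← hB]; exact (h νB hsolB).symm
  exact C.headAB f _ _ h1 h2

lemma headconτ {u : Vr} (hu : u ∉ C.τ.dom) (f : Sig) (ts : Fin (ar f) → HTerm Sig ar Vr)
    (h : ∀ ν, C.Sol ν → ν u = C.M.eval ν (HTerm.app f ts)) : False := by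
  obtain ⟨νA, hsolA, hA⟩ := C.realizeτ hu C.A
  obtain ⟨νB, hsolB, hB⟩ := C.realizeτ hu C.B
  have h1 : C.M.interp f (fun i => C.M.eval νA (ts i)) = C.A := by
    rw [← hA]; exact (h νA hsolA).symm
  have h2 : C.M.interp f (fun i => C.M.eval νB (ts i)) = C.B := by
    rw [← hB]; exact (h νB hsolB).symm
  exact C.headAB f _ _ h1 h2

/-- normalisation of the target term by unfolding τ. -/
lemma tnormal (t : HTerm Sig ar Vr) :
    ∃ k, (∃ w, C.τ.iterApp k t = HTerm.var w ∧ w ∉ C.τ.dom) ∨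
         (∃ f ts, C.τ.iterApp k t = HTerm.app f ts) := by
  cases t with
  | var u => exact var_chase C.hτR u
  | app f ts => exact ⟨0, Or.inr ⟨f, ts, rfl⟩⟩

/-- The one-occurrence descent lemma. -/
lemma descend1 (v : Vr) (hv : v ∉ C.σ.dom) :
    ∀ s t : HTerm Sig ar Vr,
      (∀ ν, C.Sol ν → C.M.eval ν s = C.M.eval ν t) → v ∈ s.vars →
      ∃ k u', u' ∈ (C.τ.iterApp k t).vars ∧ u' ∉ C.τ.dom ∧
        ∀ ν, C.Sol ν → ν u' = ν v := by
  intro s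
  induction s with
  | var w =>
      intro t hE hvs
      have hwv : v = w := mem_vars_var.mp hvs
      subst hwv
      obtain ⟨k, hk⟩ := C.tnormal t
      have hEk : ∀ ν, C.Sol ν → ν v = C.M.eval ν (C.τ.iterApp k t) := by
        intro ν hν
        rw [C.eval_iterτ hν]
        exact hE ν hν
      rcases hk with ⟨w', heq, hw'⟩ | ⟨f, ts, heq⟩
      · refine ⟨k, w', ?_, hw', ?_⟩
        · rw [heq]; exact mem_vars_var.mpr rfl
        · intro ν hν
          have := hEk ν hν
          rw [heq] at this
          exact this.symm
      · exfalso
        refine C.headconσ hv f ts ?_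
        intro ν hν
        have := hEk ν hν
        rwa [heq] at this
  | app f ss ih =>
      intro t hE hvs
      obtain ⟨k, hk⟩ := C.tnormal t
      have hEk : ∀ ν, C.Sol ν → C.M.eval ν (HTerm.app f ss) = C.M.eval ν (C.τ.iterApp k t) := by
        intro ν hν
        rw [C.eval_iterτ hν]
        exact hE ν hν
      rcases hk with ⟨w', heq, hw'⟩ | ⟨g, ts, heq⟩
      · exfalso
        refine C.headconτ hw' f ss ?_
        intro ν hν
        have := hEk ν hν
        rw [heq] at this
        exact this.symm
      · obtain ⟨ν₀, hν₀⟩ := C.exists_sol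
        have hfg : f = g := by
          by_contra hne
          have := hEk ν₀ hν₀
          rw [heq] at this
          exact C.hid.2 f g _ _ hne this
        subst hfg
        have hpt : ∀ ν, C.Sol ν → ∀ i, C.M.eval ν (ss i) = C.M.eval ν (ts i) := by
          intro ν hν
          have h1 := hEk ν hν
          rw [heq] at h1
          have h2 := C.hid.1 f (fun i => C.M.eval ν (ss i)) (fun i => C.M.eval ν (ts i)) h1
          intro i
          exact congrFun h2 i
        obtain ⟨i, hi⟩ := mem_vars_app.mp hvs
        obtain ⟨k', u', hmem, hnd, hval⟩ := ih i (ts i) (fun ν hν => hpt ν hν i) hi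
        refine ⟨k' + k, u', ?_, hnd, hval⟩
        rw [iterApp_add, heq, iterApp_app]
        exact mem_vars_app.mpr ⟨i, hmem⟩

/-- The two-occurrence descent lemma. -/
lemma descend2 (v : Vr) (hv : v ∉ C.σ.dom) (u' : Vr) (hu' : u' ∉ C.τ.dom)
    (hval : ∀ ν, C.Sol ν → ν u' = ν v) :
    ∀ s t : HTerm Sig ar Vr,
      (∀ ν, C.Sol ν → C.M.eval ν s = C.M.eval ν t) → 2 ≤ s.count v →
      ∃ k, 2 ≤ (C.τ.iterApp k t).count u' := by
  intro s
  induction s with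
  | var w =>
      intro t _ h2
      exfalso
      have := count_var_le_one (Sig := Sig) (ar := ar) w v
      omega
  | app f ss ih =>
      intro t hE h2
      obtain ⟨k, hk⟩ := C.tnormal t
      have hEk : ∀ ν, C.Sol ν → C.M.eval ν (HTerm.app f ss) = C.M.eval ν (C.τ.iterApp k t) := by
        intro ν hν
        rw [C.eval_iterτ hν]
        exact hE ν hν
      rcases hk with ⟨w', heq, hw'⟩ | ⟨g, ts, heq⟩
      · exfalso
        refine C.headconτ hw' f ss ?_
        intro ν hν
        have := hEk ν hν
        rw [heq] at this
        exact this.symm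
      · obtain ⟨ν₀, hν₀⟩ := C.exists_sol
        have hfg : f = g := by
          by_contra hne
          have := hEk ν₀ hν₀
          rw [heq] at this
          exact C.hid.2 f g _ _ hne this
        subst hfg
        have hpt : ∀ ν, C.Sol ν → ∀ i, C.M.eval ν (ss i) = C.M.eval ν (ts i) := by
          intro ν hν
          have h1 := hEk ν hν
          rw [heq] at h1
          have hinj := C.hid.1 f (fun i => C.M.eval ν (ss i)) (fun i => C.M.eval ν (ts i)) h1
          intro i
          exact congrFun hinj i
        rw [count_app] at h2
        rcases sum_two_cases _ h2 with ⟨i, hi⟩ | ⟨i, j, hij, hi, hj⟩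
        · obtain ⟨k', hk'⟩ := ih i (ts i) (fun ν hν => hpt ν hν i) hi
          refine ⟨k' + k, ?_⟩
          rw [iterApp_add, heq, iterApp_app, count_app]
          refine le_trans hk' ?_
          exact Finset.single_le_sum (f := fun l => (C.τ.iterApp k' (ts l)).count u')
            (fun l _ => Nat.zero_le _) (Finset.mem_univ i)
        · have hvi : v ∈ (ss i).vars := (mem_vars_iff_count_pos _ _).mpr (by omega)
          have hvj : v ∈ (ss j).vars := (mem_vars_iff_count_pos _ _).mpr (by omega)
          obtain ⟨k₁, u₁, hm₁, hnd₁, hval₁⟩ := C.descend1 v hv (ss i) (ts i)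
            (fun ν hν => hpt ν hν i) hvi
          obtain ⟨k₂, u₂, hm₂, hnd₂, hval₂⟩ := C.descend1 v hv (ss j) (ts j)
            (fun ν hν => hpt ν hν j) hvj
          have he₁ : u₁ = u' := C.rep_uniqueτ hnd₁ hu'
            (fun ν hν => (hval₁ ν hν).trans (hval ν hν).symm)
          have he₂ : u₂ = u' := C.rep_uniqueτ hnd₂ hu'
            (fun ν hν => (hval₂ ν hν).trans (hval ν hν).symm)
          rw [he₁] at hm₁ hnd₁
          rw [he₂] at hm₂ hnd₂
          set K := max k₁ k₂ with hK
          have hc₁ : 1 ≤ (C.τ.iterApp K (ts i)).count u' := by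
            have h1 : 1 ≤ (C.τ.iterApp k₁ (ts i)).count u' :=
              (mem_vars_iff_count_pos _ _).mp hm₁
            exact le_trans h1 (count_iterApp_mono hnd₁ _ (le_max_left _ _))
          have hc₂ : 1 ≤ (C.τ.iterApp K (ts j)).count u' := by
            have h1 : 1 ≤ (C.τ.iterApp k₂ (ts j)).count u' :=
              (mem_vars_iff_count_pos _ _).mp hm₂
            exact le_trans h1 (count_iterApp_mono hnd₂ _ (le_max_right _ _))
          refine ⟨K + k, ?_⟩
          rw [iterApp_add, heq, iterApp_app, count_app]
          have := pair_le_sum (fun l => (C.τ.iterApp K (ts l)).count u') hij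
          have hps : (C.τ.iterApp K (ts i)).count u' + (C.τ.iterApp K (ts j)).count u'
              ≤ ∑ l, (C.τ.iterApp K (ts l)).count u' :=
            pair_le_sum (fun l => (C.τ.iterApp K (ts l)).count u') hij
          omega

end EqCtx

end AuxSem
section AuxRep

open HTerm

variable {Sig : Type} {ar : Sig → ℕ} {Vr : Type}

lemma occ_empty {ρ : Subst Sig ar Vr} {v : Vr} (hv : v ∈ ρ.dom) : ρ.occ v = ∅ := by
  ext y
  simp [Subst.occ, hv]

lemma mem_occ_self {ρ : Subst Sig ar Vr} {v : Vr} (hv : v ∉ ρ.dom) : v ∈ ρ.occ v := by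
  refine ⟨?_, hv⟩
  rw [iterApp_var_of_not_mem_dom hv]
  exact mem_vars_var.mpr rfl

lemma gvars_eq (ρ : Subst Sig ar Vr) : ρ.gvars = {y | ∀ v, y ∉ ρ.occ v} := by
  ext y
  constructor
  · intro hy
    exact hy.2
  · intro h
    refine ⟨?_, h⟩
    by_contra hnd
    exact h y (mem_occ_self hnd)

namespace EqCtx

variable (C : EqCtx Sig Vr ar)

lemma rep_exists (v : Vr) (hv : v ∉ C.σ.dom) :
    ∃ u', u' ∉ C.τ.dom ∧ ∀ ν, C.Sol ν → ν u' = ν v := by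
  obtain ⟨k, u', _, hnd, hval⟩ := C.descend1 v hv (HTerm.var v) (HTerm.var v)
    (fun ν _ => rfl) (mem_vars_var.mpr rfl)
  exact ⟨u', hnd, hval⟩

noncomputable def rep (v : Vr) (hv : v ∉ C.σ.dom) : Vr := (C.rep_exists v hv).choose

lemma rep_nd (v : Vr) (hv : v ∉ C.σ.dom) : C.rep v hv ∉ C.τ.dom :=
  (C.rep_exists v hv).choose_spec.1

lemma rep_val (v : Vr) (hv : v ∉ C.σ.dom) :
    ∀ ν, C.Sol ν → ν (C.rep v hv) = ν v :=
  (C.rep_exists v hv).choose_spec.2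

lemma occ_sub (v : Vr) (hv : v ∉ C.σ.dom) {y : Vr} (hy : y ∈ C.σ.occ v) :
    y ∈ C.τ.occ (C.rep v hv) := by
  obtain ⟨hyv, -⟩ := hy
  obtain ⟨k, u', hmem, hnd, hval⟩ := C.descend1 v hv (C.σ.iterApp C.σ.nb (HTerm.var y))
    (HTerm.var y) (fun ν hν => C.eval_iterσ hν _ _) hyv
  have he : u' = C.rep v hv := C.rep_uniqueτ hnd (C.rep_nd v hv)
    (fun ν hν => (hval ν hν).trans ((C.rep_val v hv ν hν)).symm)
  subst he
  refine ⟨?_, C.rep_nd v hv⟩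
  exact (mem_vars_iff_count_pos _ _).mpr
    (stab (C.rep_nd v hv) k y ((mem_vars_iff_count_pos _ _).mp hmem))

lemma rep_swap (v : Vr) (hv : v ∉ C.σ.dom) :
    C.swap.rep (C.rep v hv) (C.rep_nd v hv) = v := by
  refine C.swap.rep_uniqueτ (C.swap.rep_nd _ (C.rep_nd v hv)) hv ?_
  intro ν hν
  exact (C.swap.rep_val _ (C.rep_nd v hv) ν hν).trans (C.rep_val v hv ν hν)

lemma occ_eq (v : Vr) (hv : v ∉ C.σ.dom) :
    C.σ.occ v = C.τ.occ (C.rep v hv) := by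
  ext y
  constructor
  · exact C.occ_sub v hv
  · intro hy
    have h2 := C.swap.occ_sub (C.rep v hv) (C.rep_nd v hv) hy
    rwa [C.rep_swap v hv] at h2

lemma fvars_sub {y : Vr} (hy : y ∈ C.σ.fvars) : y ∈ C.τ.fvars := by
  obtain ⟨z, hz⟩ := hy
  have hznd : z ∉ C.σ.dom := nondom_of_iter_nb_var C.hσR hz
  cases htt : C.τ.iterApp C.τ.nb (HTerm.var y) with
  | var z' => exact ⟨z', htt⟩
  | app f ts =>
      exfalso
      refine C.headconσ hznd f ts ?_
      intro ν hν
      have h1 : C.M.eval ν (C.σ.iterApp C.σ.nb (HTerm.var y)) = ν y := C.eval_iterσ hν _ _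
      rw [hz] at h1
      have h3 : C.M.eval ν (C.τ.iterApp C.τ.nb (HTerm.var y)) = ν y := C.eval_iterτ hν _ _
      rw [htt] at h3
      exact h1.trans h3.symm

lemma lvars_sub {y : Vr} (hy : y ∈ C.σ.lvars) : y ∈ C.τ.lvars := by
  intro z hz hznd
  have h1 : 1 ≤ (C.τ.iterApp (2 * C.τ.nb) (HTerm.var y)).count z := by
    have hp := (mem_vars_iff_count_pos _ _).mp hz
    have := count_iterApp_mono (σ := C.τ) (z := z) hznd (HTerm.var y)
      (show C.τ.nb ≤ 2 * C.τ.nb by omega)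
    omega
  by_contra hne
  have h2 : 2 ≤ (C.τ.iterApp (2 * C.τ.nb) (HTerm.var y)).count z := by omega
  have hw_nd := C.swap.rep_nd z hznd
  have hw_val := C.swap.rep_val z hznd
  have hyocc : y ∈ C.τ.occ z := ⟨hz, hznd⟩
  have hyocc' := C.swap.occ_sub z hznd hyocc
  obtain ⟨hwv, -⟩ := hyocc'
  obtain ⟨k, hk⟩ := C.swap.descend2 z hznd (C.swap.rep z hznd) hw_nd hw_val
    (C.τ.iterApp (2 * C.τ.nb) (HTerm.var y)) (HTerm.var y)
    (fun ν hν => C.eval_iterτ hν _ _) h2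
  have hk2 : 2 ≤ (C.σ.iterApp (2 * C.σ.nb) (HTerm.var y)).count (C.swap.rep z hznd) :=
    dup_stab hw_nd k y hk
  have hone : (C.σ.iterApp (2 * C.σ.nb) (HTerm.var y)).count (C.swap.rep z hznd) = 1 :=
    hy (C.swap.rep z hznd) hwv hw_nd
  omega

end EqCtx

end AuxRep

/-- Let `T` be a syntactic equality theory and `σ, τ ∈ RSubst`
both satisfiable in `T`, with `T ⊢ ∀(σ ↔ τ)`. Then `ssets(σ) = ssets(τ)`,
`gvars(σ) = gvars(τ)`, `fvars(σ) = fvars(τ)` and `lvars(σ) = lvars(τ)`. -/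
theorem ssets_gvars_fvars_lvars_eq_of_equiv
    {Sig Vr : Type} {ar : Sig → ℕ} [Denumerable Vr]
    (_hSig : ∃ a b : Sig, a ≠ b ∧ ar a = 0)
    (VI : Set Vr) (_hVI : VI.Finite)
    (T : Set (Interp Sig ar)) (_hT : IsSyntacticTheory T)
    (σ τ : Subst Sig ar Vr) (_hσ : σ.IsRSubst) (_hτ : τ.IsRSubst)
    (_hsatσ : SatisfiableIn T σ) (_hsatτ : SatisfiableIn T τ)
    (_hequiv : EquivIn T σ τ) :
    σ.ssets VI = τ.ssets VI ∧ σ.gvars = τ.gvars ∧ σ.fvars = τ.fvars ∧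
      σ.lvars = τ.lvars := by
  classical
  obtain ⟨a, b, hab, h0⟩ := _hSig
  obtain ⟨⟨M, hMT⟩, hmods⟩ := _hT
  have hid := hmods M hMT
  have hsolτ : ∀ ν : Vr → M.carrier, M.SatEqs ν (eqsOf σ) → M.SatEqs ν (eqsOf τ) :=
    fun ν h => (_hequiv M hMT ν).mp h
  have extσ : ∀ β : Vr → M.carrier,
      ∃ ν, (∀ x, x ∉ σ.dom → ν x = β x) ∧ M.SatEqs ν (eqsOf σ) := by
    intro β
    obtain ⟨ν, h1, h2⟩ := _hsatσ M hMT β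
    exact ⟨ν, h1, h2⟩
  have extτ : ∀ β : Vr → M.carrier,
      ∃ ν, (∀ x, x ∉ τ.dom → ν x = β x) ∧ M.SatEqs ν (eqsOf σ) := by
    intro β
    obtain ⟨ν, h1, h2⟩ := _hsatτ M hMT β
    exact ⟨ν, h1, (_hequiv M hMT ν).mpr h2⟩
  have hAB : M.interp a (fun i => (i.cast h0).elim0)
      ≠ M.interp b (fun _ => M.interp a (fun i => (i.cast h0).elim0)) :=
    hid.2 a b _ _ hab
  have headAB : ∀ (f : Sig) (xs ys : Fin (ar f) → M.carrier),
      M.interp f xs = M.interp a (fun i => (i.cast h0).elim0) →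
      M.interp f ys = M.interp b (fun _ => M.interp a (fun i => (i.cast h0).elim0)) → False := by
    intro f xs ys hA hB
    by_cases hfa : f = a
    · subst hfa
      exact hid.2 f b ys _ hab hB
    · exact hid.2 f a xs _ hfa hA
  let C : EqCtx Sig Vr ar :=
    { M := M, hid := hid, σ := σ, τ := τ, hσR := _hσ, hτR := _hτ,
      Sol := fun ν => M.SatEqs ν (eqsOf σ),
      hsolσ := fun _ h => h, hsolτ := hsolτ, extσ := extσ, extτ := extτ,
      A := M.interp a (fun i => (i.cast h0).elim0),
      B := M.interp b (fun _ => M.interp a (fun i => (i.cast h0).elim0)),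
      hAB := hAB, headAB := headAB }
  have hrep_nd : ∀ v (hv : v ∉ σ.dom), C.rep v hv ∉ τ.dom := fun v hv => C.rep_nd v hv
  have hocceq : ∀ v (hv : v ∉ σ.dom), σ.occ v = τ.occ (C.rep v hv) :=
    fun v hv => C.occ_eq v hv
  have hrep_nd' : ∀ v (hv : v ∉ τ.dom), C.swap.rep v hv ∉ σ.dom :=
    fun v hv => C.swap.rep_nd v hv
  have hocceq' : ∀ v (hv : v ∉ τ.dom), τ.occ v = σ.occ (C.swap.rep v hv) :=
    fun v hv => C.swap.occ_eq v hv
  refine ⟨?_, ?_, ?_, ?_⟩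
  · -- ssets
    ext g
    constructor
    · rintro ⟨⟨v, hgv⟩, hne⟩
      by_cases hv : v ∈ σ.dom
      · exfalso
        apply hne
        rw [hgv, occ_empty hv]
        simp
      · exact ⟨⟨C.rep v hv, by rw [hgv, hocceq v hv]⟩, hne⟩
    · rintro ⟨⟨v, hgv⟩, hne⟩
      by_cases hv : v ∈ τ.dom
      · exfalso
        apply hne
        rw [hgv, occ_empty hv]
        simp
      · exact ⟨⟨C.swap.rep v hv, by rw [hgv, hocceq' v hv]⟩, hne⟩
  · -- gvars
    rw [gvars_eq, gvars_eq]
    ext y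
    simp only [Set.mem_setOf_eq]
    constructor
    · intro h w
      by_cases hw : w ∈ τ.dom
      · rw [occ_empty hw]
        exact Set.notMem_empty y
      · intro hyw
        rw [hocceq' w hw] at hyw
        exact h _ hyw
    · intro h w
      by_cases hw : w ∈ σ.dom
      · rw [occ_empty hw]
        exact Set.notMem_empty y
      · intro hyw
        rw [hocceq w hw] at hyw
        exact h _ hyw
  · -- fvars
    apply Set.Subset.antisymm
    · intro y hy
      exact C.fvars_sub hy
    · intro y hy
      exact C.swap.fvars_sub hy
  · -- lvars
    apply Set.Subset.antisymm
    · intro y hy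
      exact C.lvars_sub hy
    · intro y hy
      exact C.swap.lvars_sub hy
end AuxCycle
end
end

section
/- Let d ∈ SFL and κ ∈ ASub_⊥ be such that α_ASub(d) ⪯ κ, and let (x ↦ t) be a binding with {x} ∪ vars(t) ⊆ VI. Then α_ASub(amgu_S(d, x ↦ t)) ⪯ amgu_ASub(κ, x ↦ t), where amgu_S is taken relative to the rational-tree equality theory (so the occurs-check bottom case does not apply). That is, the abstract unification on SFL is uniformly more precise than the abstract unification on the pair-sharing domain ASub. -/
open Classical

noncomputable section

/-- The set `SG` of sharing groups over `VI`: nonempty subsets of `VI`. -/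
def SG {Vr : Type} (VI : Set Vr) : Set (Set Vr) := {S | S ⊆ VI ∧ S ≠ ∅}

/-- An element of the abstract domain `SFL`: a set-sharing component together
with a freeness and a linearity component. -/
structure SFLElem (Vr : Type) where
  sh : Set (Set Vr)
  f : Set Vr
  l : Set Vr

/-- Well-formedness of an `SFL` element: `sh ∈ SH = ℘(SG VI)`, `f ⊆ VI`, `l ⊆ VI`. -/
def SFLElem.WF {Vr : Type} (VI : Set Vr) (d : SFLElem Vr) : Prop :=
  d.sh ⊆ SG VI ∧ d.f ⊆ VI ∧ d.l ⊆ VI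

/-- The bottom element `⊥_S = ⟨∅, VI, VI⟩` of `SFL`. -/
def botS {Vr : Type} (VI : Set Vr) : SFLElem Vr := ⟨∅, VI, VI⟩

/-- The order of `SFL`: `⊆` on the sharing component, `⊇` on freeness and linearity. -/
def SFLElem.leS {Vr : Type} (d1 d2 : SFLElem Vr) : Prop :=
  d1.sh ⊆ d2.sh ∧ d2.f ⊆ d1.f ∧ d2.l ⊆ d1.l

/-- The least upper bound of `SFL`. -/
def SFLElem.lubS {Vr : Type} (d1 d2 : SFLElem Vr) : SFLElem Vr :=
  ⟨d1.sh ∪ d2.sh, d1.f ∩ d2.f, d1.l ∩ d2.l⟩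

section SHOps

variable {Vr : Type}

/-- The relevant component of `sh` with respect to `V`. -/
def relSH (V : Set Vr) (sh : Set (Set Vr)) : Set (Set Vr) :=
  {S | S ∈ sh ∧ S ∩ V ≠ ∅}

/-- The irrelevant component of `sh` with respect to `V`. -/
def nrelSH (V : Set Vr) (sh : Set (Set Vr)) : Set (Set Vr) := sh \ relSH V sh

/-- The binary union function on sharing sets. -/
def binSH (sh1 sh2 : Set (Set Vr)) : Set (Set Vr) :=
  {S | ∃ S1 ∈ sh1, ∃ S2 ∈ sh2, S = S1 ∪ S2}

/-- The star-union of a sharing set: all sharing groups that are unions of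
finitely many (at least one) elements of `sh`. -/
def starSH (VI : Set Vr) (sh : Set (Set Vr)) : Set (Set Vr) :=
  {S | S ∈ SG VI ∧ ∃ F : Set (Set Vr), F.Finite ∧ F.Nonempty ∧ F ⊆ sh ∧ S = ⋃₀ F}

/-- The redundancy-removing upper closure operator `ρ_PSD` on sharing sets. -/
def rhoPSDsh (VI : Set Vr) (sh : Set (Set Vr)) : Set (Set Vr) :=
  {S | S ∈ SG VI ∧ ∀ y ∈ S, S = ⋃₀ {U | U ∈ sh ∧ y ∈ U ∧ U ⊆ S}}

/-- `ρ_PSD` on `SFL`: it acts on the sharing component only. -/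
def rhoPSD (VI : Set Vr) (d : SFLElem Vr) : SFLElem Vr :=
  ⟨rhoPSDsh VI d.sh, d.f, d.l⟩

end SHOps

/-- The `cyclic` operator, strengthening `sh` by coupling `x` with `t`. -/
def cyclicSH {Sig : Type} {ar : Sig → ℕ} {Vr : Type} (x : Vr) (t : HTerm Sig ar Vr)
    (sh : Set (Set Vr)) : Set (Set Vr) :=
  nrelSH ({x} ∪ t.vars) sh ∪ relSH (t.vars \ {x}) sh

section Predicates

variable {Sig : Type} {ar : Sig → ℕ} {Vr : Type}

/-- `t` is ground in `d`. -/
def groundD (VI : Set Vr) (d : SFLElem Vr) (t : HTerm Sig ar Vr) : Prop :=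
  t.vars ⊆ VI \ ⋃₀ d.sh

/-- `s` and `t` are independent in `d`. -/
def indD (d : SFLElem Vr) (s t : HTerm Sig ar Vr) : Prop :=
  relSH s.vars d.sh ∩ relSH t.vars d.sh = ∅

/-- `t` is free in `d` (it is a variable belonging to the freeness component). -/
def freeD (d : SFLElem Vr) (t : HTerm Sig ar Vr) : Prop :=
  ∃ y ∈ d.f, t = HTerm.var y

/-- `y` occurs linearly in `t` in `d`. -/
def occlinD (VI : Set Vr) (d : SFLElem Vr) (y : Vr) (t : HTerm Sig ar Vr) : Prop :=
  groundD VI d (HTerm.var y : HTerm Sig ar Vr) ∨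
    (t.count y = 1 ∧ y ∈ d.l ∧
      ∀ z ∈ t.vars, y ≠ z → indD d (HTerm.var y : HTerm Sig ar Vr) (HTerm.var z))

/-- `t` is linear in `d`. -/
def linD (VI : Set Vr) (d : SFLElem Vr) (t : HTerm Sig ar Vr) : Prop :=
  ∀ y ∈ t.vars, occlinD VI d y t

/-- The set of variables of interest that may share with `t` in `d`. -/
def shareWith (d : SFLElem Vr) (t : HTerm Sig ar Vr) : Set Vr :=
  ⋃₀ relSH t.vars d.sh

end Predicates

section Amgu

variable {Sig : Type} {ar : Sig → ℕ} {Vr : Type}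

/-- The core of the abstract mgu operator (the non-bottom case of `amgu_S`). -/
def amguCore (VI : Set Vr) (d : SFLElem Vr) (x : Vr) (t : HTerm Sig ar Vr) :
    SFLElem Vr :=
  let sh := d.sh
  let shx := relSH {x} sh
  let sht := relSH t.vars sh
  let shxt := shx ∩ sht
  let shm := nrelSH ({x} ∪ t.vars) sh
  let sh'' : Set (Set Vr) :=
    if freeD d (HTerm.var x : HTerm Sig ar Vr) ∨ freeD d t then
      binSH shx sht
    else if linD VI d (HTerm.var x : HTerm Sig ar Vr) ∧ linD VI d t then
      binSH (shx ∪ binSH shx (starSH VI shxt)) (sht ∪ binSH sht (starSH VI shxt))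
    else if linD VI d (HTerm.var x : HTerm Sig ar Vr) then
      binSH (starSH VI shx) sht
    else if linD VI d t then
      binSH shx (starSH VI sht)
    else
      binSH (starSH VI shx) (starSH VI sht)
  let sh' := cyclicSH x t (shm ∪ sh'')
  let Sx := shareWith d (HTerm.var x : HTerm Sig ar Vr)
  let St := shareWith d t
  let f' : Set Vr :=
    if freeD d (HTerm.var x : HTerm Sig ar Vr) ∧ freeD d t then d.f
    else if freeD d (HTerm.var x : HTerm Sig ar Vr) then d.f \ Sx
    else if freeD d t then d.f \ St
    else d.f \ (Sx ∪ St)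
  let l'' : Set Vr :=
    if linD VI d (HTerm.var x : HTerm Sig ar Vr) ∧ linD VI d t then d.l \ (Sx ∩ St)
    else if linD VI d (HTerm.var x : HTerm Sig ar Vr) then d.l \ Sx
    else if linD VI d t then d.l \ St
    else d.l \ (Sx ∪ St)
  let l' := (VI \ ⋃₀ sh') ∪ f' ∪ l''
  ⟨sh', f', l'⟩

/-- The abstract mgu operator `amgu_S`, relative to the rational-tree equality
theory (no occurs-check bottom case). -/
def amguRT (VI : Set Vr) (d : SFLElem Vr) (x : Vr) (t : HTerm Sig ar Vr) :
    SFLElem Vr :=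
  if d = botS VI then botS VI else amguCore VI d x t

/-- The abstract unification operator `aunify_S` (rational-tree case),
applying `amgu_S` along a sequence of bindings. -/
def aunifyRT (VI : Set Vr) (d : SFLElem Vr) :
    List (Vr × HTerm Sig ar Vr) → SFLElem Vr
  | [] => d
  | b :: bs => aunifyRT VI (amguRT VI d b.1 b.2) bs

end Amgu

/-- A (non-bottom) element of the `ASub` domain: definitely-ground variables
together with a pair-sharing/non-linearity relation encoded as sharing
groups of cardinality 1 or 2. -/
structure ASubElem (Vr : Type) where
  G : Set Vr
  R : Set (Set Vr)

/-- Well-formedness of an `ASub` element. -/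
def ASubElem.WF {Vr : Type} (VI : Set Vr) (κ : ASubElem Vr) : Prop :=
  κ.G ⊆ VI ∧ κ.G ∩ ⋃₀ κ.R = ∅ ∧
  ∀ S ∈ κ.R, S ⊆ VI ∧ 1 ≤ S.ncard ∧ S.ncard ≤ 2

/-- The order on `ASub_⊥` (`none` is the bottom element `⊥_ASub`). -/
def asubLE {Vr : Type} : Option (ASubElem Vr) → Option (ASubElem Vr) → Prop
  | none, _ => True
  | some _, none => False
  | some κ1, some κ2 => κ2.G ⊆ κ1.G ∧ κ1.R ⊆ κ2.R

/-- The abstraction `α_ASub : SFL → ASub_⊥`. -/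
def alphaASub {Vr : Type} (VI : Set Vr) (d : SFLElem Vr) : Option (ASubElem Vr) :=
  if d = botS VI then none
  else some
    ⟨VI \ ⋃₀ d.sh,
     {S | ∃ x, x ∈ VI ∧ x ∈ ⋃₀ d.sh ∧ x ∉ d.l ∧ S = {x}} ∪
     {S | ∃ x y, x ∈ VI ∧ y ∈ VI ∧ x ≠ y ∧ (∃ U ∈ d.sh, x ∈ U ∧ y ∈ U) ∧
            S = {x, y}}⟩

section ASubOps

variable {Sig : Type} {ar : Sig → ℕ} {Vr : Type}

/-- `y` occurs linearly in `t` in the abstract substitution `κ`. -/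
def occlinK (κ : ASubElem Vr) (y : Vr) (t : HTerm Sig ar Vr) : Prop :=
  y ∈ κ.G ∨ (t.count y = 1 ∧ ∀ z ∈ t.vars, ({y, z} : Set Vr) ∉ κ.R)

/-- The abstract multiplicity `χ_κ(t) ∈ {0, 1, 2}` of a term. -/
def chiT (κ : ASubElem Vr) (t : HTerm Sig ar Vr) : ℕ :=
  if t.vars ⊆ κ.G then 0
  else if ∀ y ∈ t.vars, occlinK κ y t then 1
  else 2

/-- `bin(V, W) = {{v,w} ⊆ VI | v ∈ V, w ∈ W}`. -/
def binPair (VI V W : Set Vr) : Set (Set Vr) :=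
  {S | ∃ v ∈ V, ∃ w ∈ W, S = ({v, w} : Set Vr) ∧ S ⊆ VI}

/-- The sharing caused by an abstract equation (`soln`). -/
def solnA (VI : Set Vr) (κ : ASubElem Vr) (x : Vr) (t : HTerm Sig ar Vr) :
    ASubElem Vr :=
  let Vx : Set Vr := {x}
  let Vt := t.vars
  let cx := chiT κ (HTerm.var x : HTerm Sig ar Vr)
  let ct := chiT κ t
  if cx = 0 ∨ ct = 0 then ⟨Vx ∪ Vt, ∅⟩
  else if cx = 1 ∧ ct = 1 then ⟨∅, binPair VI Vx Vt⟩
  else if cx = 1 then ⟨∅, binPair VI Vx (Vx ∪ Vt)⟩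
  else if ct = 1 then ⟨∅, binPair VI (Vx ∪ Vt) Vt⟩
  else ⟨∅, binPair VI (Vx ∪ Vt) (Vx ∪ Vt)⟩

/-- Abstract composition of abstract substitutions. -/
def compA (VI : Set Vr) (κ κ' : ASubElem Vr) : ASubElem Vr :=
  ⟨κ.G ∪ κ'.G,
   {S | ∃ u v : Vr, S = ({u, v} : Set Vr) ∧ S ⊆ VI ∧ S ∩ (κ.G ∪ κ'.G) = ∅ ∧
      (({u, v} : Set Vr) ∈ κ.R ∨
        ∃ x y : Vr, (u = x ∨ ({u, x} : Set Vr) ∈ κ.R) ∧ ({x, y} : Set Vr) ∈ κ'.R ∧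
          (y = v ∨ ({y, v} : Set Vr) ∈ κ.R))}⟩

/-- The abstract mgu operator on `ASub_⊥`. -/
def amguASub (VI : Set Vr) :
    Option (ASubElem Vr) → Vr → HTerm Sig ar Vr → Option (ASubElem Vr)
  | none, _, _ => none
  | some κ, x, t => some (compA VI κ (solnA VI κ x t))

end ASubOps


section AuxProof

variable {Sig : Type} {ar : Sig → ℕ} {Vr : Type}

lemma vars_var (x : Vr) : (HTerm.var x : HTerm Sig ar Vr).vars = {x} := rfl

lemma count_var_self (x : Vr) : (HTerm.var x : HTerm Sig ar Vr).count x = 1 := by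
  simp [HTerm.count]

lemma relSH_mem {V : Set Vr} {sh : Set (Set Vr)} {S : Set Vr} (h : S ∈ relSH V sh) :
    S ∈ sh ∧ ∃ w ∈ V, w ∈ S := by
  obtain ⟨h1, h2⟩ := h
  refine ⟨h1, ?_⟩
  obtain ⟨w, hw⟩ := Set.nonempty_iff_ne_empty.2 h2
  exact ⟨w, hw.2, hw.1⟩

lemma relSH_mem_x {x : Vr} {sh : Set (Set Vr)} {S : Set Vr}
    (h : S ∈ relSH {x} sh) : S ∈ sh ∧ x ∈ S := by
  obtain ⟨h1, w, hw1, hw2⟩ := relSH_mem h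
  rw [Set.mem_singleton_iff] at hw1
  subst hw1
  exact ⟨h1, hw2⟩

lemma nrelSH_mem {V : Set Vr} {sh : Set (Set Vr)} {S : Set Vr} (h : S ∈ nrelSH V sh) :
    S ∈ sh ∧ ∀ w ∈ S, w ∉ V := by
  obtain ⟨h1, h2⟩ := h
  exact ⟨h1, fun w hwS hwV => h2 ⟨h1, Set.nonempty_iff_ne_empty.1 ⟨w, hwS, hwV⟩⟩⟩

lemma cyclicSH_subset {x : Vr} {t : HTerm Sig ar Vr} {sh : Set (Set Vr)} :
    cyclicSH x t sh ⊆ sh := by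
  rintro S (h | h)
  · exact h.1
  · exact h.1

lemma starSH_elem {VI : Set Vr} {A : Set (Set Vr)} {S : Set Vr}
    (h : S ∈ starSH VI A) {u : Vr} (hu : u ∈ S) : ∃ U ∈ A, u ∈ U := by
  obtain ⟨-, F, -, -, hFA, rfl⟩ := h
  obtain ⟨U, hU, huU⟩ := hu
  exact ⟨U, hFA hU, huU⟩

lemma binSH_empty_left {B : Set (Set Vr)} : binSH (∅ : Set (Set Vr)) B = ∅ := by
  ext S; simp [binSH]

lemma binSH_empty_right {A : Set (Set Vr)} : binSH A (∅ : Set (Set Vr)) = ∅ := by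
  ext S; simp [binSH]

lemma starSH_empty {VI : Set Vr} : starSH VI (∅ : Set (Set Vr)) = ∅ := by
  ext S
  simp only [starSH, Set.mem_setOf_eq, Set.mem_empty_iff_false, iff_false]
  rintro ⟨-, F, -, ⟨U, hU⟩, hFA, -⟩
  exact (hFA hU)

/-- The routing relation appearing in the pair-sharing component of `compA`. -/
def InRR (R R' : Set (Set Vr)) (u v : Vr) : Prop :=
  ({u, v} : Set Vr) ∈ R ∨
    ∃ a b : Vr, (u = a ∨ ({u, a} : Set Vr) ∈ R) ∧ ({a, b} : Set Vr) ∈ R' ∧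
      (b = v ∨ ({b, v} : Set Vr) ∈ R)

lemma route {R R' : Set (Set Vr)} {sh : Set (Set Vr)}
    (hpair : ∀ U ∈ sh, ∀ p ∈ U, ∀ q ∈ U, p ≠ q → ({p, q} : Set Vr) ∈ R)
    {U V : Set Vr} {u a b v : Vr}
    (hU : U ∈ sh) (hu : u ∈ U) (ha : a ∈ U)
    (hab : ({a, b} : Set Vr) ∈ R')
    (hV : V ∈ sh) (hb : b ∈ V) (hv : v ∈ V) : InRR R R' u v := by
  refine Or.inr ⟨a, b, ?_, hab, ?_⟩
  · by_cases h : u = a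
    · exact Or.inl h
    · exact Or.inr (hpair U hU u hu a ha h)
  · by_cases h : b = v
    · exact Or.inl h
    · exact Or.inr (hpair V hV b hb v hv h)

end AuxProof

/-- The abstract unification on `SFL` is uniformly more
precise than the abstract unification on the pair-sharing domain `ASub`. -/
theorem amguRT_more_precise_than_amguASub
    {Sig Vr : Type} {ar : Sig → ℕ}
    (VI : Set Vr) (_hVI : VI.Finite)
    (d : SFLElem Vr) (_hd : d.WF VI)
    (κ : Option (ASubElem Vr)) (_hκ : ∀ k, κ = some k → k.WF VI)
    (x : Vr) (t : HTerm Sig ar Vr)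
    (_hxt : insert x t.vars ⊆ VI) (_hb : t ≠ HTerm.var x)
    (_hle : asubLE (alphaASub VI d) κ) :
    asubLE (alphaASub VI (amguRT VI d x t)) (amguASub VI κ x t) := by
  classical
  by_cases hbot : d = botS VI
  · unfold amguRT
    rw [if_pos hbot]
    unfold alphaASub
    rw [if_pos rfl]
    exact True.intro
  unfold amguRT
  rw [if_neg hbot]
  rcases κ with _ | k
  · exfalso
    simp only [alphaASub] at _hle
    rw [if_neg hbot] at _hle
    exact _hle
  simp only [alphaASub] at _hle
  rw [if_neg hbot] at _hle
  obtain ⟨hG, hR⟩ := _hle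
  rw [show amguASub VI (some k) x t = some (compA VI k (solnA VI k x t)) from rfl]
  obtain ⟨hWF, -, -⟩ := _hd
  have hUVI : ∀ U ∈ d.sh, U ⊆ VI := fun U hU => (hWF hU).1
  have hxVI : x ∈ VI := _hxt (Set.mem_insert _ _)
  have htVI : t.vars ⊆ VI := fun w hw => _hxt (Set.mem_insert_of_mem _ hw)
  have hpair : ∀ U ∈ d.sh, ∀ p ∈ U, ∀ q ∈ U, p ≠ q → ({p, q} : Set Vr) ∈ k.R := by
    intro U hU p hp q hq hne
    exact hR (Or.inr ⟨p, q, hUVI U hU hp, hUVI U hU hq, hne, ⟨U, hU, hp, hq⟩, rfl⟩)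
  have hsingle : ∀ y, y ∈ ⋃₀ d.sh → y ∉ d.l → ({y} : Set Vr) ∈ k.R := by
    intro y hy hyl
    obtain ⟨U, hU, hyU⟩ := hy
    exact hR (Or.inl ⟨y, hUVI U hU hyU, ⟨U, hU, hyU⟩, hyl, rfl⟩)
  have hGnot : ∀ z ∈ k.G, z ∉ ⋃₀ d.sh := fun z hz => (hG hz).2
  -- linearity transfer lemmas
  have hlinx_of_ground : x ∉ ⋃₀ d.sh → linD VI d (HTerm.var x : HTerm Sig ar Vr) := by
    intro hx y hy
    rw [vars_var, Set.mem_singleton_iff] at hy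
    rw [hy]
    refine Or.inl (fun z hz => ?_)
    rw [vars_var, Set.mem_singleton_iff] at hz
    rw [hz]
    exact ⟨hxVI, hx⟩
  have hlint_of_ground : (∀ w ∈ t.vars, w ∉ ⋃₀ d.sh) → linD VI d t := by
    intro hgt y hy
    refine Or.inl (fun z hz => ?_)
    rw [vars_var, Set.mem_singleton_iff] at hz
    rw [hz]
    exact ⟨htVI hy, hgt y hy⟩
  have hlinx_cases : (∀ y ∈ (HTerm.var x : HTerm Sig ar Vr).vars,
      occlinK k y (HTerm.var x : HTerm Sig ar Vr)) →
      linD VI d (HTerm.var x : HTerm Sig ar Vr) := by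
    intro hall
    have hx := hall x (by rw [vars_var]; exact Set.mem_singleton x)
    rcases hx with hxG | ⟨-, hz⟩
    · exact hlinx_of_ground (hGnot x hxG)
    · have hxx : ({x} : Set Vr) ∉ k.R := by
        have h := hz x (by rw [vars_var]; exact Set.mem_singleton x)
        rwa [Set.pair_eq_singleton] at h
      by_cases hxsh : x ∈ ⋃₀ d.sh
      · by_cases hxl : x ∈ d.l
        · intro y hy
          rw [vars_var, Set.mem_singleton_iff] at hy
          rw [hy]
          refine Or.inr ⟨count_var_self x, hxl, ?_⟩
          intro z hz' hne
          rw [vars_var, Set.mem_singleton_iff] at hz'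
          exact absurd hz'.symm hne
        · exact absurd (hsingle x hxsh hxl) hxx
      · exact hlinx_of_ground hxsh
  have hlint_cases : (∀ y ∈ t.vars, occlinK k y t) → linD VI d t := by
    intro hall y hy
    rcases hall y hy with hyG | ⟨hc, hz⟩
    · refine Or.inl (fun z hz' => ?_)
      rw [vars_var, Set.mem_singleton_iff] at hz'
      rw [hz']
      exact ⟨htVI hy, hGnot y hyG⟩
    · have hyy : ({y} : Set Vr) ∉ k.R := by
        have h := hz y hy
        rwa [Set.pair_eq_singleton] at h
      by_cases hysh : y ∈ ⋃₀ d.sh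
      · by_cases hyl : y ∈ d.l
        · refine Or.inr ⟨hc, hyl, ?_⟩
          intro z hzv hne
          rw [indD, vars_var, vars_var, Set.eq_empty_iff_forall_notMem]
          intro U hU
          obtain ⟨hUsh, hyU⟩ := relSH_mem_x hU.1
          obtain ⟨-, hzU⟩ := relSH_mem_x hU.2
          exact hz z hzv (hpair U hUsh y hyU z hzU hne)
        · exact absurd (hsingle y hysh hyl) hyy
      · refine Or.inl (fun z hz' => ?_)
        rw [vars_var, Set.mem_singleton_iff] at hz'
        rw [hz']
        exact ⟨htVI hy, hysh⟩
  have hlx2 : ¬ linD VI d (HTerm.var x : HTerm Sig ar Vr) →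
      chiT k (HTerm.var x : HTerm Sig ar Vr) = 2 := by
    intro hn
    have hA : ¬ ((HTerm.var x : HTerm Sig ar Vr).vars ⊆ k.G) := fun hsub =>
      hn (hlinx_of_ground (hGnot x (hsub (by rw [vars_var]; exact Set.mem_singleton x))))
    have hB : ¬ (∀ y ∈ (HTerm.var x : HTerm Sig ar Vr).vars,
        occlinK k y (HTerm.var x : HTerm Sig ar Vr)) :=
      fun hall => hn (hlinx_cases hall)
    simp only [chiT]
    rw [if_neg hA, if_neg hB]
  have hlt2 : ¬ linD VI d t → chiT k t = 2 := by
    intro hn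
    have hA : ¬ (t.vars ⊆ k.G) := fun hsub =>
      hn (hlint_of_ground (fun w hw => hGnot w (hsub hw)))
    have hB : ¬ (∀ y ∈ t.vars, occlinK k y t) := fun hall => hn (hlint_cases hall)
    simp only [chiT]
    rw [if_neg hA, if_neg hB]
  have hcx0 : chiT k (HTerm.var x : HTerm Sig ar Vr) = 0 → x ∈ k.G := by
    intro h0
    by_contra hxG
    have hA : ¬ ((HTerm.var x : HTerm Sig ar Vr).vars ⊆ k.G) := fun hsub =>
      hxG (hsub (by rw [vars_var]; exact Set.mem_singleton x))
    simp only [chiT] at h0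
    rw [if_neg hA] at h0
    split_ifs at h0
  have hct0 : chiT k t = 0 → t.vars ⊆ k.G := by
    intro h0
    by_contra hA
    simp only [chiT] at h0
    rw [if_neg hA] at h0
    split_ifs at h0
  -- the components of amguCore
  set shx := relSH {x} d.sh with hshxDef
  set sht := relSH t.vars d.sh with hshtDef
  set shxt := shx ∩ sht with hshxtDef
  set shm := nrelSH ({x} ∪ t.vars) d.sh with hshmDef
  set SH2 := (if freeD d (HTerm.var x : HTerm Sig ar Vr) ∨ freeD d t then binSH shx sht
      else if linD VI d (HTerm.var x : HTerm Sig ar Vr) ∧ linD VI d t then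
        binSH (shx ∪ binSH shx (starSH VI shxt)) (sht ∪ binSH sht (starSH VI shxt))
      else if linD VI d (HTerm.var x : HTerm Sig ar Vr) then binSH (starSH VI shx) sht
      else if linD VI d t then binSH shx (starSH VI sht)
      else binSH (starSH VI shx) (starSH VI sht)) with hSH2Def
  set Sx := shareWith d (HTerm.var x : HTerm Sig ar Vr) with hSxDef
  set St := shareWith d t with hStDef
  set L2 := (if linD VI d (HTerm.var x : HTerm Sig ar Vr) ∧ linD VI d t then d.l \ (Sx ∩ St)
      else if linD VI d (HTerm.var x : HTerm Sig ar Vr) then d.l \ Sx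
      else if linD VI d t then d.l \ St
      else d.l \ (Sx ∪ St)) with hL2Def
  have hcoreSh : (amguCore VI d x t).sh = cyclicSH x t (shm ∪ SH2) := rfl
  have hcoreL : ∃ F2, (amguCore VI d x t).l =
      (VI \ ⋃₀ cyclicSH x t (shm ∪ SH2)) ∪ F2 ∪ L2 := ⟨_, rfl⟩
  have hsolnEq : solnA VI k x t =
      (if chiT k (HTerm.var x : HTerm Sig ar Vr) = 0 ∨ chiT k t = 0 then
        (⟨{x} ∪ t.vars, ∅⟩ : ASubElem Vr)
      else if chiT k (HTerm.var x : HTerm Sig ar Vr) = 1 ∧ chiT k t = 1 then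
        ⟨∅, binPair VI {x} t.vars⟩
      else if chiT k (HTerm.var x : HTerm Sig ar Vr) = 1 then
        ⟨∅, binPair VI {x} ({x} ∪ t.vars)⟩
      else if chiT k t = 1 then
        ⟨∅, binPair VI ({x} ∪ t.vars) t.vars⟩
      else ⟨∅, binPair VI ({x} ∪ t.vars) ({x} ∪ t.vars)⟩) := rfl
  by_cases hg : chiT k (HTerm.var x : HTerm Sig ar Vr) = 0 ∨ chiT k t = 0
  · -- ground case : sh'' is empty and l'' = d.l
    have hsoln0 : solnA VI k x t = ⟨{x} ∪ t.vars, ∅⟩ := by rw [hsolnEq, if_pos hg]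
    have hkey : SH2 = ∅ ∧ L2 = d.l := by
      rcases hg with h0 | h0
      · have hxsh : x ∉ ⋃₀ d.sh := hGnot x (hcx0 h0)
        have hshxEmpty : shx = ∅ := by
          rw [hshxDef, Set.eq_empty_iff_forall_notMem]
          intro U hU
          obtain ⟨hU1, hU2⟩ := relSH_mem_x hU
          exact hxsh ⟨U, hU1, hU2⟩
        have hlinx := hlinx_of_ground hxsh
        have hSxEmpty : Sx = ∅ := by
          show ⋃₀ relSH (HTerm.var x : HTerm Sig ar Vr).vars d.sh = ∅
          rw [vars_var, Set.eq_empty_iff_forall_notMem]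
          rintro z ⟨U, hU, hzU⟩
          obtain ⟨hU1, hU2⟩ := relSH_mem_x hU
          exact hxsh ⟨U, hU1, hU2⟩
        constructor
        · rw [hSH2Def, hshxtDef, hshxEmpty]
          split_ifs <;>
            simp [binSH_empty_left, binSH_empty_right, starSH_empty, Set.empty_inter,
              Set.empty_union]
        · rw [hL2Def, hSxEmpty]
          by_cases hLt : linD VI d t
          · rw [if_pos ⟨hlinx, hLt⟩]
            simp
          · rw [if_neg (fun h => hLt h.2), if_pos hlinx]
            simp
      · have htsh : ∀ w ∈ t.vars, w ∉ ⋃₀ d.sh := fun w hw => hGnot w (hct0 h0 hw)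
        have hshtEmpty : sht = ∅ := by
          rw [hshtDef, Set.eq_empty_iff_forall_notMem]
          intro U hU
          obtain ⟨hU1, w, hw, hwU⟩ := relSH_mem hU
          exact htsh w hw ⟨U, hU1, hwU⟩
        have hlint := hlint_of_ground htsh
        have hStEmpty : St = ∅ := by
          show ⋃₀ relSH t.vars d.sh = ∅
          rw [Set.eq_empty_iff_forall_notMem]
          rintro z ⟨U, hU, hzU⟩
          obtain ⟨hU1, w, hw, hwU⟩ := relSH_mem hU
          exact htsh w hw ⟨U, hU1, hwU⟩
        constructor
        · rw [hSH2Def, hshxtDef, hshtEmpty]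
          split_ifs <;>
            simp [binSH_empty_left, binSH_empty_right, starSH_empty, Set.inter_empty,
              Set.union_empty]
        · rw [hL2Def, hStEmpty]
          by_cases hLx : linD VI d (HTerm.var x : HTerm Sig ar Vr)
          · rw [if_pos ⟨hLx, hlint⟩]
            simp
          · rw [if_neg (fun h => hLx h.1), if_neg hLx, if_pos hlint]
            simp
    have hcoreSub : (amguCore VI d x t).sh ⊆ shm := by
      rw [hcoreSh, hkey.1, Set.union_empty]
      exact cyclicSH_subset
    by_cases hbot2 : amguCore VI d x t = botS VI
    · simp only [alphaASub]
      rw [if_pos hbot2]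
      exact True.intro
    simp only [alphaASub]
    rw [if_neg hbot2]
    refine ⟨?_, ?_⟩
    · intro z hz
      have hz' : z ∈ k.G ∪ (solnA VI k x t).G := hz
      rw [hsoln0] at hz'
      constructor
      · rcases hz' with h | h
        · exact (hG h).1
        · rcases h with h | h
          · rw [Set.mem_singleton_iff] at h
            rw [h]
            exact hxVI
          · exact htVI h
      · rintro ⟨T, hT, hzT⟩
        obtain ⟨hTsh, hTdisj⟩ := nrelSH_mem (hcoreSub hT)
        rcases hz' with h | h
        · exact hGnot z h ⟨T, hTsh, hzT⟩
        · exact hTdisj z hzT h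
    · rintro S (⟨y, hyVI, hysh, hyl, rfl⟩ | ⟨u, v, huVI, hvVI, hne, ⟨T, hT, huT, hvT⟩, rfl⟩)
      · obtain ⟨T, hT, hyT⟩ := hysh
        obtain ⟨hTsh, hTdisj⟩ := nrelSH_mem (hcoreSub hT)
        have hyl' : y ∉ d.l := by
          intro hy
          apply hyl
          obtain ⟨F2, hF2⟩ := hcoreL
          rw [hF2]
          exact Or.inr (hkey.2 ▸ hy)
        refine ⟨y, y, (Set.pair_eq_singleton y).symm, Set.singleton_subset_iff.2 hyVI, ?_,
          Or.inl ?_⟩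
        · rw [Set.eq_empty_iff_forall_notMem]
          rintro z ⟨hz1, hz2⟩
          rw [Set.mem_singleton_iff] at hz1
          rw [hz1] at hz2
          have hz2' : y ∈ k.G ∪ (solnA VI k x t).G := hz2
          rw [hsoln0] at hz2'
          rcases hz2' with h | h
          · exact hGnot y h ⟨T, hTsh, hyT⟩
          · exact hTdisj y hyT h
        · rw [Set.pair_eq_singleton]
          exact hsingle y ⟨T, hTsh, hyT⟩ hyl'
      · obtain ⟨hTsh, hTdisj⟩ := nrelSH_mem (hcoreSub hT)
        refine ⟨u, v, rfl, ?_, ?_, Or.inl (hpair T hTsh u huT v hvT hne)⟩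
        · rw [Set.insert_subset_iff, Set.singleton_subset_iff]
          exact ⟨huVI, hvVI⟩
        · rw [Set.eq_empty_iff_forall_notMem]
          rintro z ⟨hz1, hz2⟩
          have hzT : z ∈ T := by
            rcases hz1 with hz1 | hz1
            · rw [hz1]; exact huT
            · rw [Set.mem_singleton_iff] at hz1
              rw [hz1]; exact hvT
          have hz2' : z ∈ k.G ∪ (solnA VI k x t).G := hz2
          rw [hsoln0] at hz2'
          rcases hz2' with h | h
          · exact hGnot z h ⟨T, hTsh, hzT⟩
          · exact hTdisj z hzT h
  · -- non-ground case
    have hsolnG : (solnA VI k x t).G = ∅ := by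
      rw [hsolnEq, if_neg hg]
      split_ifs <;> rfl
    have hfact_xt : ∀ w ∈ t.vars, ({x, w} : Set Vr) ∈ (solnA VI k x t).R := by
      intro w hw
      have hsubVI : ({x, w} : Set Vr) ⊆ VI := by
        rw [Set.insert_subset_iff, Set.singleton_subset_iff]
        exact ⟨hxVI, htVI hw⟩
      rw [hsolnEq, if_neg hg]
      split_ifs with h1 h2 h3
      · exact ⟨x, rfl, w, hw, rfl, hsubVI⟩
      · exact ⟨x, rfl, w, Or.inr hw, rfl, hsubVI⟩
      · exact ⟨x, Or.inl rfl, w, hw, rfl, hsubVI⟩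
      · exact ⟨x, Or.inl rfl, w, Or.inr hw, rfl, hsubVI⟩
    have hfact_x : chiT k t = 2 → ({x} : Set Vr) ∈ (solnA VI k x t).R := by
      intro hct2
      have hsubVI : ({x} : Set Vr) ⊆ VI := Set.singleton_subset_iff.2 hxVI
      rw [hsolnEq, if_neg hg]
      split_ifs with h1 h2 h3
      · obtain ⟨-, h⟩ := h1
        exfalso; omega
      · exact ⟨x, rfl, x, Or.inl rfl, (Set.pair_eq_singleton x).symm, hsubVI⟩
      · exfalso; omega
      · exact ⟨x, Or.inl rfl, x, Or.inl rfl, (Set.pair_eq_singleton x).symm, hsubVI⟩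
    have hfact_t : chiT k (HTerm.var x : HTerm Sig ar Vr) = 2 →
        ∀ w ∈ t.vars, ∀ w' ∈ t.vars, ({w, w'} : Set Vr) ∈ (solnA VI k x t).R := by
      intro hcx2 w hw w' hw'
      have hsubVI : ({w, w'} : Set Vr) ⊆ VI := by
        rw [Set.insert_subset_iff, Set.singleton_subset_iff]
        exact ⟨htVI hw, htVI hw'⟩
      rw [hsolnEq, if_neg hg]
      split_ifs with h1 h2 h3
      · obtain ⟨h, -⟩ := h1
        exfalso; omega
      · exfalso; omega
      · exact ⟨w, Or.inr hw, w', hw', rfl, hsubVI⟩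
      · exact ⟨w, Or.inr hw, w', Or.inr hw', rfl, hsubVI⟩
    have hmainA : (∀ T ∈ SH2, ∀ u ∈ T, ∃ U ∈ d.sh, u ∈ U) ∧
        (∀ T ∈ SH2, ∀ u ∈ T, ∀ v ∈ T, u ≠ v → InRR k.R (solnA VI k x t).R u v) := by
      by_cases hF : freeD d (HTerm.var x : HTerm Sig ar Vr) ∨ freeD d t
      · rw [hSH2Def, if_pos hF]
        constructor
        · rintro T ⟨S1, hS1, S2, hS2, rfl⟩ u hu
          rcases hu with hu | hu
          · exact ⟨S1, (relSH_mem_x hS1).1, hu⟩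
          · exact ⟨S2, (relSH_mem hS2).1, hu⟩
        · rintro T ⟨S1, hS1, S2, hS2, rfl⟩ u hu v hv hne
          obtain ⟨hS1sh, hxS1⟩ := relSH_mem_x hS1
          obtain ⟨hS2sh, w0, hw0t, hw0S2⟩ := relSH_mem hS2
          rcases hu with hu | hu <;> rcases hv with hv | hv
          · exact Or.inl (hpair S1 hS1sh u hu v hv hne)
          · exact route hpair hS1sh hu hxS1 (hfact_xt w0 hw0t) hS2sh hw0S2 hv
          · exact route hpair hS2sh hu hw0S2
              (by rw [Set.pair_comm]; exact hfact_xt w0 hw0t) hS1sh hxS1 hv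
          · exact Or.inl (hpair S2 hS2sh u hu v hv hne)
      rw [hSH2Def, if_neg hF]
      by_cases hLL : linD VI d (HTerm.var x : HTerm Sig ar Vr) ∧ linD VI d t
      · rw [if_pos hLL]
        have charX : ∀ S1 ∈ shx ∪ binSH shx (starSH VI shxt),
            ∃ U0 ∈ d.sh, x ∈ U0 ∧ ∀ u ∈ S1, u ∈ U0 ∨
              ∃ U ∈ d.sh, u ∈ U ∧ x ∈ U ∧ ∃ w ∈ t.vars, w ∈ U := by
          rintro S1 (hS1 | ⟨A, hA, B, hB, rfl⟩)
          · obtain ⟨h1, h2⟩ := relSH_mem_x hS1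
            exact ⟨S1, h1, h2, fun u hu => Or.inl hu⟩
          · obtain ⟨h1, h2⟩ := relSH_mem_x hA
            refine ⟨A, h1, h2, ?_⟩
            rintro u (hu | hu)
            · exact Or.inl hu
            · obtain ⟨U, hU, huU⟩ := starSH_elem hB hu
              rw [hshxtDef] at hU
              obtain ⟨hUx, hUt⟩ := hU
              obtain ⟨hUsh, hxU⟩ := relSH_mem_x hUx
              obtain ⟨-, w, hwt, hwU⟩ := relSH_mem hUt
              exact Or.inr ⟨U, hUsh, huU, hxU, w, hwt, hwU⟩
        have charT : ∀ S2 ∈ sht ∪ binSH sht (starSH VI shxt),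
            ∃ V0 ∈ d.sh, (∃ w0 ∈ t.vars, w0 ∈ V0) ∧ ∀ u ∈ S2, u ∈ V0 ∨
              ∃ U ∈ d.sh, u ∈ U ∧ x ∈ U ∧ ∃ w ∈ t.vars, w ∈ U := by
          rintro S2 (hS2 | ⟨A, hA, B, hB, rfl⟩)
          · obtain ⟨h1, w0, hw0, hw0A⟩ := relSH_mem hS2
            exact ⟨S2, h1, ⟨w0, hw0, hw0A⟩, fun u hu => Or.inl hu⟩
          · obtain ⟨h1, w0, hw0, hw0A⟩ := relSH_mem hA
            refine ⟨A, h1, ⟨w0, hw0, hw0A⟩, ?_⟩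
            rintro u (hu | hu)
            · exact Or.inl hu
            · obtain ⟨U, hU, huU⟩ := starSH_elem hB hu
              rw [hshxtDef] at hU
              obtain ⟨hUx, hUt⟩ := hU
              obtain ⟨hUsh, hxU⟩ := relSH_mem_x hUx
              obtain ⟨-, w, hwt, hwU⟩ := relSH_mem hUt
              exact Or.inr ⟨U, hUsh, huU, hxU, w, hwt, hwU⟩
        constructor
        · rintro T ⟨S1, hS1, S2, hS2, rfl⟩ u hu
          obtain ⟨U0, hU0, hxU0, hchar1⟩ := charX S1 hS1
          obtain ⟨V0, hV0, -, hchar2⟩ := charT S2 hS2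
          rcases hu with hu | hu
          · rcases hchar1 u hu with h | ⟨U, hU, huU, -⟩
            · exact ⟨U0, hU0, h⟩
            · exact ⟨U, hU, huU⟩
          · rcases hchar2 u hu with h | ⟨U, hU, huU, -⟩
            · exact ⟨V0, hV0, h⟩
            · exact ⟨U, hU, huU⟩
        · rintro T ⟨S1, hS1, S2, hS2, rfl⟩ u hu v hv hne
          obtain ⟨U0, hU0, hxU0, hchar1⟩ := charX S1 hS1
          obtain ⟨V0, hV0, ⟨w0, hw0t, hw0V0⟩, hchar2⟩ := charT S2 hS2
          have hu' : u ∈ U0 ∨ u ∈ V0 ∨ ∃ U ∈ d.sh, u ∈ U ∧ x ∈ U ∧ ∃ w ∈ t.vars, w ∈ U := by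
            rcases hu with hu | hu
            · rcases hchar1 u hu with h | h
              · exact Or.inl h
              · exact Or.inr (Or.inr h)
            · rcases hchar2 u hu with h | h
              · exact Or.inr (Or.inl h)
              · exact Or.inr (Or.inr h)
          have hv' : v ∈ U0 ∨ v ∈ V0 ∨ ∃ U ∈ d.sh, v ∈ U ∧ x ∈ U ∧ ∃ w ∈ t.vars, w ∈ U := by
            rcases hv with hv | hv
            · rcases hchar1 v hv with h | h
              · exact Or.inl h
              · exact Or.inr (Or.inr h)
            · rcases hchar2 v hv with h | h
              · exact Or.inr (Or.inl h)
              · exact Or.inr (Or.inr h)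
          rcases hu' with hu' | hu' | ⟨Uu, hUu, huUu, hxUu, wu, hwut, hwuUu⟩ <;>
            rcases hv' with hv' | hv' | ⟨Uv, hUv, hvUv, hxUv, wv, hwvt, hwvUv⟩
          · exact Or.inl (hpair U0 hU0 u hu' v hv' hne)
          · exact route hpair hU0 hu' hxU0 (hfact_xt w0 hw0t) hV0 hw0V0 hv'
          · exact route hpair hU0 hu' hxU0 (hfact_xt wv hwvt) hUv hwvUv hvUv
          · exact route hpair hV0 hu' hw0V0
              (by rw [Set.pair_comm]; exact hfact_xt w0 hw0t) hU0 hxU0 hv'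
          · exact Or.inl (hpair V0 hV0 u hu' v hv' hne)
          · exact route hpair hV0 hu' hw0V0
              (by rw [Set.pair_comm]; exact hfact_xt w0 hw0t) hUv hxUv hvUv
          · exact route hpair hUu huUu hwuUu
              (by rw [Set.pair_comm]; exact hfact_xt wu hwut) hU0 hxU0 hv'
          · exact route hpair hUu huUu hxUu (hfact_xt w0 hw0t) hV0 hw0V0 hv'
          · exact route hpair hUu huUu hxUu (hfact_xt wv hwvt) hUv hwvUv hvUv
      rw [if_neg hLL]
      by_cases hLx : linD VI d (HTerm.var x : HTerm Sig ar Vr)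
      · rw [if_pos hLx]
        have hct2 : chiT k t = 2 := hlt2 (fun h => hLL ⟨hLx, h⟩)
        constructor
        · rintro T ⟨S1, hS1, S2, hS2, rfl⟩ u hu
          rcases hu with hu | hu
          · obtain ⟨U, hU, huU⟩ := starSH_elem hS1 hu
            exact ⟨U, (relSH_mem_x hU).1, huU⟩
          · exact ⟨S2, (relSH_mem hS2).1, hu⟩
        · rintro T ⟨S1, hS1, S2, hS2, rfl⟩ u hu v hv hne
          obtain ⟨hS2sh, w0, hw0t, hw0S2⟩ := relSH_mem hS2
          rcases hu with hu | hu <;> rcases hv with hv | hv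
          · obtain ⟨Uu, hUu, huUu⟩ := starSH_elem hS1 hu
            obtain ⟨Uv, hUv, hvUv⟩ := starSH_elem hS1 hv
            obtain ⟨hUush, hxUu⟩ := relSH_mem_x hUu
            obtain ⟨hUvsh, hxUv⟩ := relSH_mem_x hUv
            exact route hpair hUush huUu hxUu
              (by rw [Set.pair_eq_singleton]; exact hfact_x hct2) hUvsh hxUv hvUv
          · obtain ⟨Uu, hUu, huUu⟩ := starSH_elem hS1 hu
            obtain ⟨hUush, hxUu⟩ := relSH_mem_x hUu
            exact route hpair hUush huUu hxUu (hfact_xt w0 hw0t) hS2sh hw0S2 hv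
          · obtain ⟨Uv, hUv, hvUv⟩ := starSH_elem hS1 hv
            obtain ⟨hUvsh, hxUv⟩ := relSH_mem_x hUv
            exact route hpair hS2sh hu hw0S2
              (by rw [Set.pair_comm]; exact hfact_xt w0 hw0t) hUvsh hxUv hvUv
          · exact Or.inl (hpair S2 hS2sh u hu v hv hne)
      rw [if_neg hLx]
      have hcx2 : chiT k (HTerm.var x : HTerm Sig ar Vr) = 2 := hlx2 hLx
      by_cases hLt : linD VI d t
      · rw [if_pos hLt]
        constructor
        · rintro T ⟨S1, hS1, S2, hS2, rfl⟩ u hu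
          rcases hu with hu | hu
          · exact ⟨S1, (relSH_mem_x hS1).1, hu⟩
          · obtain ⟨U, hU, huU⟩ := starSH_elem hS2 hu
            exact ⟨U, (relSH_mem hU).1, huU⟩
        · rintro T ⟨S1, hS1, S2, hS2, rfl⟩ u hu v hv hne
          obtain ⟨hS1sh, hxS1⟩ := relSH_mem_x hS1
          rcases hu with hu | hu <;> rcases hv with hv | hv
          · exact Or.inl (hpair S1 hS1sh u hu v hv hne)
          · obtain ⟨Uv, hUv, hvUv⟩ := starSH_elem hS2 hv
            obtain ⟨hUvsh, wv, hwvt, hwvUv⟩ := relSH_mem hUv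
            exact route hpair hS1sh hu hxS1 (hfact_xt wv hwvt) hUvsh hwvUv hvUv
          · obtain ⟨Uu, hUu, huUu⟩ := starSH_elem hS2 hu
            obtain ⟨hUush, wu, hwut, hwuUu⟩ := relSH_mem hUu
            exact route hpair hUush huUu hwuUu
              (by rw [Set.pair_comm]; exact hfact_xt wu hwut) hS1sh hxS1 hv
          · obtain ⟨Uu, hUu, huUu⟩ := starSH_elem hS2 hu
            obtain ⟨Uv, hUv, hvUv⟩ := starSH_elem hS2 hv
            obtain ⟨hUush, wu, hwut, hwuUu⟩ := relSH_mem hUu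
            obtain ⟨hUvsh, wv, hwvt, hwvUv⟩ := relSH_mem hUv
            exact route hpair hUush huUu hwuUu (hfact_t hcx2 wu hwut wv hwvt) hUvsh hwvUv hvUv
      rw [if_neg hLt]
      have hct2 : chiT k t = 2 := hlt2 hLt
      constructor
      · rintro T ⟨S1, hS1, S2, hS2, rfl⟩ u hu
        rcases hu with hu | hu
        · obtain ⟨U, hU, huU⟩ := starSH_elem hS1 hu
          exact ⟨U, (relSH_mem_x hU).1, huU⟩
        · obtain ⟨U, hU, huU⟩ := starSH_elem hS2 hu
          exact ⟨U, (relSH_mem hU).1, huU⟩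
      · rintro T ⟨S1, hS1, S2, hS2, rfl⟩ u hu v hv hne
        rcases hu with hu | hu <;> rcases hv with hv | hv
        · obtain ⟨Uu, hUu, huUu⟩ := starSH_elem hS1 hu
          obtain ⟨Uv, hUv, hvUv⟩ := starSH_elem hS1 hv
          obtain ⟨hUush, hxUu⟩ := relSH_mem_x hUu
          obtain ⟨hUvsh, hxUv⟩ := relSH_mem_x hUv
          exact route hpair hUush huUu hxUu
            (by rw [Set.pair_eq_singleton]; exact hfact_x hct2) hUvsh hxUv hvUv
        · obtain ⟨Uu, hUu, huUu⟩ := starSH_elem hS1 hu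
          obtain ⟨hUush, hxUu⟩ := relSH_mem_x hUu
          obtain ⟨Uv, hUv, hvUv⟩ := starSH_elem hS2 hv
          obtain ⟨hUvsh, wv, hwvt, hwvUv⟩ := relSH_mem hUv
          exact route hpair hUush huUu hxUu (hfact_xt wv hwvt) hUvsh hwvUv hvUv
        · obtain ⟨Uu, hUu, huUu⟩ := starSH_elem hS2 hu
          obtain ⟨hUush, wu, hwut, hwuUu⟩ := relSH_mem hUu
          obtain ⟨Uv, hUv, hvUv⟩ := starSH_elem hS1 hv
          obtain ⟨hUvsh, hxUv⟩ := relSH_mem_x hUv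
          exact route hpair hUush huUu hwuUu
            (by rw [Set.pair_comm]; exact hfact_xt wu hwut) hUvsh hxUv hvUv
        · obtain ⟨Uu, hUu, huUu⟩ := starSH_elem hS2 hu
          obtain ⟨Uv, hUv, hvUv⟩ := starSH_elem hS2 hv
          obtain ⟨hUush, wu, hwut, hwuUu⟩ := relSH_mem hUu
          obtain ⟨hUvsh, wv, hwvt, hwvUv⟩ := relSH_mem hUv
          exact route hpair hUush huUu hwuUu (hfact_t hcx2 wu hwut wv hwvt) hUvsh hwvUv hvUv
    have hmainB : ∀ y, y ∈ ⋃₀ d.sh → y ∉ L2 → InRR k.R (solnA VI k x t).R y y := by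
      have hSxE : ∀ {y : Vr}, y ∈ Sx → ∃ U ∈ d.sh, y ∈ U ∧ x ∈ U := by
        intro y hy
        obtain ⟨U, hU, hyU⟩ :=
          (show y ∈ ⋃₀ relSH (HTerm.var x : HTerm Sig ar Vr).vars d.sh from hy)
        rw [vars_var] at hU
        obtain ⟨h1, h2⟩ := relSH_mem_x hU
        exact ⟨U, h1, hyU, h2⟩
      have hStE : ∀ {y : Vr}, y ∈ St → ∃ U ∈ d.sh, y ∈ U ∧ ∃ w ∈ t.vars, w ∈ U := by
        intro y hy
        obtain ⟨U, hU, hyU⟩ := (show y ∈ ⋃₀ relSH t.vars d.sh from hy)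
        obtain ⟨h1, w, hw, hwU⟩ := relSH_mem hU
        exact ⟨U, h1, hyU, w, hw, hwU⟩
      have hnotl : ∀ {y : Vr}, y ∈ ⋃₀ d.sh → y ∉ d.l → InRR k.R (solnA VI k x t).R y y := by
        intro y hy hyl
        exact Or.inl (by rw [Set.pair_eq_singleton]; exact hsingle y hy hyl)
      have hviaSx : chiT k t = 2 → ∀ {y : Vr}, y ∈ Sx → InRR k.R (solnA VI k x t).R y y := by
        intro hct2 y hy
        obtain ⟨U, hU, hyU, hxU⟩ := hSxE hy
        exact route hpair hU hyU hxU
          (by rw [Set.pair_eq_singleton]; exact hfact_x hct2) hU hxU hyU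
      have hviaSt : chiT k (HTerm.var x : HTerm Sig ar Vr) = 2 →
          ∀ {y : Vr}, y ∈ St → InRR k.R (solnA VI k x t).R y y := by
        intro hcx2 y hy
        obtain ⟨U, hU, hyU, w, hw, hwU⟩ := hStE hy
        exact route hpair hU hyU hwU (hfact_t hcx2 w hw w hw) hU hwU hyU
      intro y hy hyL
      rw [hL2Def] at hyL
      by_cases hyl : y ∈ d.l
      · by_cases hLx : linD VI d (HTerm.var x : HTerm Sig ar Vr) <;>
          by_cases hLt : linD VI d t
        · rw [if_pos ⟨hLx, hLt⟩] at hyL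
          have hymem : y ∈ Sx ∩ St := by
            by_contra hc
            exact hyL ⟨hyl, hc⟩
          obtain ⟨U1, hU1, hyU1, hxU1⟩ := hSxE hymem.1
          obtain ⟨U2, hU2, hyU2, w, hw, hwU2⟩ := hStE hymem.2
          exact route hpair hU1 hyU1 hxU1 (hfact_xt w hw) hU2 hwU2 hyU2
        · rw [if_neg (fun h => hLt h.2), if_pos hLx] at hyL
          have hySx : y ∈ Sx := by
            by_contra hc
            exact hyL ⟨hyl, hc⟩
          exact hviaSx (hlt2 hLt) hySx
        · rw [if_neg (fun h => hLx h.1), if_neg hLx, if_pos hLt] at hyL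
          have hySt : y ∈ St := by
            by_contra hc
            exact hyL ⟨hyl, hc⟩
          exact hviaSt (hlx2 hLx) hySt
        · rw [if_neg (fun h => hLx h.1), if_neg hLx, if_neg hLt] at hyL
          have hyS : y ∈ Sx ∪ St := by
            by_contra hc
            exact hyL ⟨hyl, hc⟩
          rcases hyS with h | h
          · exact hviaSx (hlt2 hLt) h
          · exact hviaSt (hlx2 hLx) h
      · exact hnotl hy hyl
    have hcoreSub : (amguCore VI d x t).sh ⊆ shm ∪ SH2 := by
      rw [hcoreSh]
      exact cyclicSH_subset
    have hcov : ∀ {T : Set Vr}, T ∈ shm ∪ SH2 → ∀ u ∈ T, ∃ U ∈ d.sh, u ∈ U := by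
      rintro T (hT | hT) u hu
      · exact ⟨T, (nrelSH_mem hT).1, hu⟩
      · exact hmainA.1 T hT u hu
    by_cases hbot2 : amguCore VI d x t = botS VI
    · simp only [alphaASub]
      rw [if_pos hbot2]
      exact True.intro
    simp only [alphaASub]
    rw [if_neg hbot2]
    refine ⟨?_, ?_⟩
    · intro z hz
      have hz' : z ∈ k.G ∪ (solnA VI k x t).G := hz
      rw [hsolnG, Set.union_empty] at hz'
      refine ⟨(hG hz').1, ?_⟩
      rintro ⟨T, hT, hzT⟩
      obtain ⟨U, hU, hzU⟩ := hcov (hcoreSub hT) z hzT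
      exact hGnot z hz' ⟨U, hU, hzU⟩
    · rintro S (⟨y, hyVI, hysh, hyl, rfl⟩ | ⟨u, v, huVI, hvVI, hne, ⟨T, hT, huT, hvT⟩, rfl⟩)
      · obtain ⟨T, hT, hyT⟩ := hysh
        have hysh' : y ∈ ⋃₀ d.sh := by
          obtain ⟨U, hU, hyU⟩ := hcov (hcoreSub hT) y hyT
          exact ⟨U, hU, hyU⟩
        have hyL2 : y ∉ L2 := by
          intro hy
          apply hyl
          obtain ⟨F2, hF2⟩ := hcoreL
          rw [hF2]
          exact Or.inr hy
        refine ⟨y, y, (Set.pair_eq_singleton y).symm, Set.singleton_subset_iff.2 hyVI, ?_,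
          hmainB y hysh' hyL2⟩
        rw [Set.eq_empty_iff_forall_notMem]
        rintro z ⟨hz1, hz2⟩
        rw [Set.mem_singleton_iff] at hz1
        rw [hz1] at hz2
        have hz2' : y ∈ k.G ∪ (solnA VI k x t).G := hz2
        rw [hsolnG, Set.union_empty] at hz2'
        exact hGnot y hz2' hysh'
      · have hT' := hcoreSub hT
        have hInRR : InRR k.R (solnA VI k x t).R u v := by
          rcases hT' with hT'' | hT''
          · exact Or.inl (hpair T (nrelSH_mem hT'').1 u huT v hvT hne)
          · exact hmainA.2 T hT'' u huT v hvT hne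
        refine ⟨u, v, rfl, ?_, ?_, hInRR⟩
        · rw [Set.insert_subset_iff, Set.singleton_subset_iff]
          exact ⟨huVI, hvVI⟩
        · rw [Set.eq_empty_iff_forall_notMem]
          rintro z ⟨hz1, hz2⟩
          have hzT : z ∈ T := by
            rcases hz1 with hz1 | hz1
            · rw [hz1]; exact huT
            · rw [Set.mem_singleton_iff] at hz1
              rw [hz1]; exact hvT
          have hz2' : z ∈ k.G ∪ (solnA VI k x t).G := hz2
          rw [hsolnG, Set.union_empty] at hz2'
          obtain ⟨U, hU, hzU⟩ := hcov hT' z hzT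
          exact hGnot z hz2' ⟨U, hU, hzU⟩
end
end
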